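/- arXiv:2603.09008 — 3 statements merged into one kernel-verified Lean document; each statement's English description precedes it below -/
import Mathlib

section
/- Let n ≥ 1 and r ≥ 1 be integers. Let F^r_n be the number of fixed points of the random permutation of [n] obtained by performing r iterated random-to-top shuffles starting from the identity. Let π be a uniformly random permutation of [n] and let K^r_n be the number of distinct values among r i.i.d. uniform samples from [n], with π independent of K^r_n. Then F^r_n is equal in distribution to n − max_{1 ≤ i ≤ K^r_n} π(i) + Σ_{i=1}^{K^r_n} 1(π(i) = i). -/
open MeasureTheory ProbabilityTheory Filter Finset Topology
open scoped NNReal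

/-- Move card `c` to the top (position `0`) of the deck `π`
(where `π i` is the card in position `i`). -/
def moveToTop {n : ℕ} (c : Fin n) (π : Equiv.Perm (Fin n)) : Equiv.Perm (Fin n) :=
  π * ((π⁻¹ c).cycleRange)⁻¹

/-- The permutation (position `i` ↦ card in position `i`) obtained after performing
iterated random-to-top moves with selected cards `s 0, s 1, …`, starting from the
identity deck `(1, 2, …, n)`. -/
def rttPerm (n r : ℕ) (s : Fin r → Fin n) : Equiv.Perm (Fin n) :=
  (List.ofFn s).foldl (fun π c => moveToTop c π) 1

/-- Number of fixed points of a permutation. -/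
def fixedPointCount {n : ℕ} (π : Equiv.Perm (Fin n)) : ℕ :=
  (Finset.univ.filter fun i => π i = i).card

/-- Number of descents of a permutation. -/
def descentCount {n : ℕ} (π : Equiv.Perm (Fin n)) : ℕ :=
  (Finset.univ.filter fun p : Fin n × Fin n =>
    (p.1 : ℕ) + 1 = (p.2 : ℕ) ∧ π p.2 < π p.1).card

/-- Number of inversions of a permutation. -/
def inversionCount {n : ℕ} (π : Equiv.Perm (Fin n)) : ℕ :=
  (Finset.univ.filter fun p : Fin n × Fin n => p.1 < p.2 ∧ π p.2 < π p.1).card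

/-- The number of distinct values among `s 0, …, s (r-1)` (the occupancy count `K^r_n`). -/
def distinctCount (n r : ℕ) (s : Fin r → Fin n) : ℕ :=
  (Finset.univ.image s).card

/-- Probability of the event `p` under the uniform distribution on the finite type `α`. -/
noncomputable def unifProb {α : Type*} [Fintype α] (p : α → Prop) : ℝ :=
  (Nat.card {x : α // p x} : ℝ) / (Fintype.card α : ℝ)

/-- Expectation of `f` under the uniform distribution on the finite type `α`. -/
noncomputable def unifExpect {α : Type*} [Fintype α] (f : α → ℝ) : ℝ :=
  (∑ x, f x) / (Fintype.card α : ℝ)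

/-- Variance of `f` under the uniform distribution on the finite type `α`. -/
noncomputable def unifVar {α : Type*} [Fintype α] (f : α → ℝ) : ℝ :=
  unifExpect fun x => (f x - unifExpect f) ^ 2

/-- `max_{1 ≤ i ≤ k} π(i)`: the maximum card value (in `{1, …, n}`, i.e. `val + 1`)
among the first `k` positions of `π`. -/
def maxFirst (n k : ℕ) (π : Equiv.Perm (Fin n)) : ℕ :=
  (Finset.univ.filter fun i : Fin n => (i : ℕ) < k).sup fun i => (π i : ℕ) + 1

/-- The number of fixed points among the first `k` positions of `π`. -/
def fixedFirst (n k : ℕ) (π : Equiv.Perm (Fin n)) : ℕ :=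
  (Finset.univ.filter fun i : Fin n => (i : ℕ) < k ∧ π i = i).card

lemma erase_eq_eraseIdx' {α : Type*} [DecidableEq α] :
    ∀ (l : List α), l.Nodup → ∀ (j : ℕ) (hj : j < l.length), l.erase l[j] = l.eraseIdx j
  | [], _, j, hj => by simp at hj
  | a :: t, hnd, 0, hj => by simp
  | a :: t, hnd, j+1, hj => by
    have hj' : j < t.length := by simpa using hj
    have hmem : t[j] ∈ t := List.getElem_mem hj'
    have hne : a ≠ t[j] := fun h => (List.nodup_cons.1 hnd).1 (h ▸ hmem)
    simp only [List.getElem_cons_succ, List.eraseIdx_cons_succ]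
    rw [List.erase_cons_tail (by simpa using hne)]
    rw [erase_eq_eraseIdx' t (List.nodup_cons.1 hnd).2 j hj']

lemma ofFn_moveToTop {N : ℕ} (c : Fin (N+1)) (π : Equiv.Perm (Fin (N+1))) :
    List.ofFn (moveToTop c π) = c :: (List.ofFn π).erase c := by
  set j : Fin (N+1) := π⁻¹ c with hj
  have hjlt : (j : ℕ) < (List.ofFn π).length := by simp; have := j.2; omega
  have hc : (List.ofFn π)[(j : ℕ)]'hjlt = c := by
    rw [List.getElem_ofFn]; simp [hj]
  have herase : (List.ofFn π).erase c = (List.ofFn π).eraseIdx (j : ℕ) := by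
    conv_lhs => rw [← hc]
    exact erase_eq_eraseIdx' _ (List.nodup_ofFn.2 π.injective) _ hjlt
  rw [herase]
  apply List.ext_getElem
  · simp [List.length_eraseIdx]; have := j.2; omega
  intro i h1 h2
  have hiN : i < N + 1 := by simpa using h1
  rw [List.getElem_ofFn]
  have happ : (moveToTop c π) ⟨i, hiN⟩ = π (j.cycleRange.symm ⟨i, hiN⟩) := by
    simp only [moveToTop, Equiv.Perm.mul_apply, Equiv.Perm.inv_def, hj]
  rw [happ]
  rcases i with _ | i
  · have h0 : (⟨0, hiN⟩ : Fin (N+1)) = 0 := rfl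
    rw [h0, Fin.cycleRange_symm_zero, List.getElem_cons_zero, hj]
    exact π.apply_symm_apply c
  · have hiN' : i < N := by
      by_contra h
      have : i = N := by omega
      subst this
      simp [List.length_eraseIdx, hjlt] at h2
      have := j.2; split_ifs at h2 <;> omega
    have hsucc : (⟨i+1, hiN⟩ : Fin (N+1)) = Fin.succ ⟨i, hiN'⟩ := rfl
    rw [hsucc, Fin.cycleRange_symm_succ, List.getElem_cons_succ]
    rcases lt_or_ge i (j : ℕ) with hlt | hle
    · have : j.succAbove ⟨i, hiN'⟩ = Fin.castSucc ⟨i, hiN'⟩ :=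
        Fin.succAbove_of_castSucc_lt _ _ (by simpa [Fin.lt_def] using hlt)
      rw [this, List.getElem_eraseIdx_of_lt _ hlt, List.getElem_ofFn]
      rfl
    · have : j.succAbove ⟨i, hiN'⟩ = Fin.succ ⟨i, hiN'⟩ :=
        Fin.succAbove_of_le_castSucc _ _ (by simpa [Fin.le_def] using hle)
      rw [this, List.getElem_eraseIdx_of_ge _ hle, List.getElem_ofFn]
      rfl

lemma dedup_concat {α : Type*} [DecidableEq α] (c : α) (l : List α) :
    (l ++ [c]).dedup = l.dedup.erase c ++ [c] := by
  induction l with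
  | nil => simp
  | cons a l ih =>
    rcases Decidable.em (a ∈ l) with hmem | hmem
    · rw [List.cons_append, List.dedup_cons_of_mem (by simp [hmem]),
        List.dedup_cons_of_mem hmem, ih]
    · rcases Decidable.em (a = c) with rfl | hac
      · rw [List.cons_append, List.dedup_cons_of_mem (by simp),
          List.dedup_cons_of_notMem hmem, ih, List.erase_cons_head,
          List.erase_of_not_mem (by simp [hmem, List.mem_dedup])]
      · rw [List.cons_append, List.dedup_cons_of_notMem (by simp [hmem, hac]),
          List.dedup_cons_of_notMem hmem, ih,
          List.erase_cons_tail (by simp [hac]), List.cons_append]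

lemma sort_erase {α : Type*} [LinearOrder α] [DecidableEq α] (s : Finset α) (a : α) :
    (s.erase a).sort (· ≤ ·) = (s.sort (· ≤ ·)).erase a := by
  refine List.Perm.eq_of_pairwise' (Finset.pairwise_sort _ _)
    ((Finset.pairwise_sort s _).sublist (List.erase_sublist (a := a))) ?_
  rw [← Multiset.coe_eq_coe, ← Multiset.coe_erase, Finset.sort_eq, Finset.sort_eq,
      Finset.erase_val]

lemma reverse_erase_of_nodup {α : Type*} [DecidableEq α] {l : List α} (d : l.Nodup) (a : α) :
    (l.erase a).reverse = l.reverse.erase a := by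
  rw [d.erase_eq_filter, (List.nodup_reverse.2 d).erase_eq_filter, ← List.filter_reverse]

/-- The deck after random-to-top moves `l` (earliest first). -/

def deckList (n : ℕ) (l : List (Fin n)) : List (Fin n) :=
  l.dedup.reverse ++ (Finset.univ \ l.toFinset).sort (· ≤ ·)

lemma deckList_concat (l : List (Fin n)) (c : Fin n) :
    deckList n (l ++ [c]) = c :: (deckList n l).erase c := by
  have hcompl : Finset.univ \ (l ++ [c]).toFinset = (Finset.univ \ l.toFinset).erase c := by
    ext x; simp [Finset.mem_erase]
  rw [deckList, dedup_concat, List.reverse_append, List.reverse_singleton,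
    List.singleton_append, hcompl, sort_erase, deckList]
  rcases Decidable.em (c ∈ l) with hmem | hmem
  · have hc1 : c ∈ l.dedup.reverse := by simp [List.mem_dedup, hmem]
    have hc2 : c ∉ (Finset.univ \ l.toFinset).sort (· ≤ ·) := by
      simp [Finset.mem_sort, hmem]
    rw [List.erase_append_left _ hc1, List.erase_of_not_mem hc2,
      reverse_erase_of_nodup (List.nodup_dedup l)]
    simp
  · have hc1 : c ∉ l.dedup.reverse := by simp [List.mem_dedup, hmem]
    rw [List.erase_append_right _ hc1,
      List.erase_of_not_mem (by simp [List.mem_dedup, hmem]), List.cons_append]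

lemma ofFn_moveToTop_gen {n : ℕ} (c : Fin n) (π : Equiv.Perm (Fin n)) :
    List.ofFn (moveToTop c π) = c :: (List.ofFn π).erase c := by
  cases n with
  | zero => exact c.elim0
  | succ N => exact ofFn_moveToTop c π

lemma deckList_length {n : ℕ} (l : List (Fin n)) : (deckList n l).length = n := by
  have h1 : l.dedup.length ≤ n := by
    rw [← List.card_toFinset]
    simpa using Finset.card_le_card (Finset.subset_univ l.toFinset)
  simp [deckList, Finset.length_sort, Finset.card_sdiff_of_subset (Finset.subset_univ _),
    List.card_toFinset]
  omega

lemma ofFn_foldl {n : ℕ} (l : List (Fin n)) :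
    List.ofFn ⇑(l.foldl (fun π c => moveToTop c π) 1) = deckList n l := by
  induction l using List.reverseRecOn with
  | nil =>
    show List.ofFn ⇑(1 : Equiv.Perm (Fin n)) = _
    rw [Equiv.Perm.coe_one, List.ofFn_id, deckList]
    simp [Fin.sort_univ]
  | append_singleton l c ih =>
    rw [List.foldl_append, List.foldl_cons, List.foldl_nil, ofFn_moveToTop_gen, ih,
      deckList_concat]

lemma ofFn_rttPerm {n r : ℕ} (s : Fin r → Fin n) :
    List.ofFn ⇑(rttPerm n r s) = deckList n (List.ofFn s) := ofFn_foldl _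

lemma rttPerm_apply {n r : ℕ} (s : Fin r → Fin n) (i : Fin n) :
    rttPerm n r s i
      = (deckList n (List.ofFn s))[(i : ℕ)]'(by rw [deckList_length]; exact i.2) := by
  have h1 : rttPerm n r s i = (List.ofFn ⇑(rttPerm n r s))[(i : ℕ)]'(by simp) := by
    rw [List.getElem_ofFn]
  rw [h1]
  exact List.getElem_of_eq (ofFn_rttPerm s) _

lemma map_dedup {α β : Type*} [DecidableEq α] [DecidableEq β] {f : α → β}
    (hf : Function.Injective f) (l : List α) : (l.map f).dedup = l.dedup.map f := by
  induction l with
  | nil => simp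
  | cons a l ih =>
    rcases Decidable.em (a ∈ l) with hmem | hmem
    · rw [List.map_cons, List.dedup_cons_of_mem (List.mem_map_of_mem (f := f) hmem),
        List.dedup_cons_of_mem hmem, ih]
    · rw [List.map_cons, List.dedup_cons_of_notMem, List.dedup_cons_of_notMem hmem,
        List.map_cons, ih]
      simp only [List.mem_map]
      rintro ⟨b, hb, hfb⟩
      exact hmem ((hf hfb) ▸ hb)

lemma card_filter_lt (n k : ℕ) (hk : k ≤ n) :
    (Finset.univ.filter fun i : Fin n => (i : ℕ) < k).card = k := by
  apply Finset.card_eq_of_bijective (fun i hi => (⟨i, lt_of_lt_of_le hi hk⟩ : Fin n))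
  · intro a ha
    simp only [Finset.mem_filter] at ha
    exact ⟨a, ha.2, rfl⟩
  · intro i hi; simp [hi]
  · intro i j hi hj h
    simpa using congrArg Fin.val h

lemma card_filter_ge (n k : ℕ) (hk : k ≤ n) :
    (Finset.univ.filter fun i : Fin n => k ≤ (i : ℕ)).card = n - k := by
  have h := Finset.card_filter_add_card_filter_not
    (s := Finset.univ) (p := fun i : Fin n => (i : ℕ) < k)
  have h2 : (Finset.univ.filter fun i : Fin n => ¬ (i : ℕ) < k)
      = Finset.univ.filter fun i : Fin n => k ≤ (i : ℕ) := by
    apply Finset.filter_congr; intro i _; simp [not_lt]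
  rw [card_filter_lt n k hk, h2] at h
  simp only [Finset.card_univ, Fintype.card_fin] at h
  omega

lemma fp_decomp {n : ℕ} (π : Equiv.Perm (Fin n)) (k : ℕ) (hk : k ≤ n)
    (hmono : ∀ i j : Fin n, k ≤ (i : ℕ) → i < j → π i < π j) :
    fixedPointCount π = (n - maxFirst n k π) + fixedFirst n k π := by
  set M := maxFirst n k π with hM
  have hub : ∀ i : Fin n, (i : ℕ) < k → (π i : ℕ) + 1 ≤ M := fun i hi =>
    Finset.le_sup (f := fun i : Fin n => (π i : ℕ) + 1) (by simp [hi])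
  have hMn : M ≤ n := Finset.sup_le fun i _ => (π i).2
  have hkM : k ≤ M := by
    have himg : ((Finset.univ.filter fun i : Fin n => (i : ℕ) < k).image π).card = k := by
      rw [Finset.card_image_of_injective _ π.injective, card_filter_lt n k hk]
    have hsub : (Finset.univ.filter fun i : Fin n => (i : ℕ) < k).image π
        ⊆ Finset.univ.filter fun v : Fin n => (v : ℕ) < M := by
      intro v hv
      simp only [Finset.mem_image, Finset.mem_filter, Finset.mem_univ, true_and] at hv ⊢
      obtain ⟨i, hi, rfl⟩ := hv
      exact lt_of_lt_of_le (Nat.lt_succ_self _) (hub i hi)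
    calc k = _ := himg.symm
      _ ≤ (Finset.univ.filter fun v : Fin n => (v : ℕ) < M).card := Finset.card_le_card hsub
      _ = M := card_filter_lt n M hMn
  have hfix : ∀ i : Fin n, M ≤ (i : ℕ) → π i = i := by
    have haux : ∀ d : ℕ, ∀ i : Fin n, M ≤ (i : ℕ) → n - (i : ℕ) ≤ d → π i = i := by
      intro d
      induction d with
      | zero => intro i _ h; exact absurd h (by have := i.2; omega)
      | succ d ihd =>
        intro i hMi hni
        have hgt : ∀ x : Fin n, (i : ℕ) < (x : ℕ) → π x = x := fun x hx =>
          ihd x (le_trans hMi (le_of_lt hx)) (by have := x.2; omega)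
        have hle : (π i : ℕ) ≤ (i : ℕ) := by
          by_contra h
          push_neg at h
          have h1 := hgt (π i) h
          have h2 := π.injective h1
          rw [h2] at h
          exact lt_irrefl _ h
        have hge : (i : ℕ) ≤ (π i : ℕ) := by
          by_contra h
          push_neg at h
          set y := π⁻¹ i with hy
          have hyi : π y = i := π.apply_symm_apply i
          have h1 : (y : ℕ) ≤ (i : ℕ) := by
            by_contra h2
            push_neg at h2
            have h3 := hgt y h2
            rw [h3] at hyi
            rw [hyi] at h2
            exact lt_irrefl _ h2
          have h2 : (y : ℕ) ≠ (i : ℕ) := by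
            intro h3
            have h4 : y = i := Fin.ext h3
            rw [h4] at hyi
            rw [hyi] at h
            exact lt_irrefl _ h
          rcases lt_or_ge (y : ℕ) k with h4 | h4
          · have h5 := hub y h4
            rw [hyi] at h5
            omega
          · have h5 := hmono y i h4 (by rw [Fin.lt_def]; omega)
            rw [hyi, Fin.lt_def] at h5
            omega
        exact Fin.ext (le_antisymm hle hge)
    intro i hMi
    exact haux n i hMi (by omega)
  have hnotfix : ∀ i : Fin n, k ≤ (i : ℕ) → (i : ℕ) < M → ¬ π i = i := by
    intro i hki hiM hfixi
    have hne : (Finset.univ.filter fun i : Fin n => (i : ℕ) < k).Nonempty := by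
      rcases Nat.eq_zero_or_pos k with rfl | hkpos
      · simp [hM, maxFirst] at hiM
      · refine ⟨⟨0, by omega⟩, ?_⟩; simp [hkpos]
    obtain ⟨x, hx, hMx⟩ := Finset.exists_mem_eq_sup _ hne fun i : Fin n => (π i : ℕ) + 1
    simp only [Finset.mem_filter, Finset.mem_univ, true_and] at hx
    have hxi : (x : ℕ) < (i : ℕ) := lt_of_lt_of_le hx hki
    have hMx' : M = (π x : ℕ) + 1 := hMx
    have hπx : (i : ℕ) < (π x : ℕ) := by
      have h1 : (i : ℕ) ≤ (π x : ℕ) := by omega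
      rcases lt_or_eq_of_le h1 with h2 | h2
      · exact h2
      · exfalso
        have h3 : π x = π i := by rw [hfixi]; exact Fin.ext h2.symm
        have h4 := π.injective h3
        rw [h4] at hxi
        exact lt_irrefl _ hxi
    set S := Finset.univ.filter fun y : Fin n => (i : ℕ) < (π y : ℕ) with hS
    set T := Finset.univ.filter fun y : Fin n => (i : ℕ) < (y : ℕ) with hT
    have hcard : S.card = T.card := by
      have himg : S.image π = T := by
        ext v
        simp only [hS, hT, Finset.mem_image, Finset.mem_filter, Finset.mem_univ, true_and]
        constructor
        · rintro ⟨y, hy, rfl⟩; exact hy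
        · intro hv; exact ⟨π⁻¹ v, by rw [show π (π⁻¹ v) = v from π.apply_symm_apply v]; exact hv, π.apply_symm_apply v⟩
      rw [← himg, Finset.card_image_of_injective _ π.injective]
    have hsub : insert x T ⊆ S := by
      intro y hy
      rcases Finset.mem_insert.1 hy with rfl | hy
      · simp only [hS, Finset.mem_filter, Finset.mem_univ, true_and]
        exact hπx
      · simp only [hT, Finset.mem_filter, Finset.mem_univ, true_and] at hy
        have h6 := hmono i y hki (by rw [Fin.lt_def]; omega)
        rw [hfixi, Fin.lt_def] at h6
        simp only [hS, Finset.mem_filter, Finset.mem_univ, true_and]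
        exact h6
    have hxT : x ∉ T := by simp [hT]; omega
    have := Finset.card_le_card hsub
    rw [Finset.card_insert_of_notMem hxT] at this
    omega
  have hsplit : (Finset.univ.filter fun i : Fin n => π i = i)
      = (Finset.univ.filter fun i : Fin n => (i : ℕ) < k ∧ π i = i)
        ∪ (Finset.univ.filter fun i : Fin n => M ≤ (i : ℕ)) := by
    ext i
    simp only [Finset.mem_filter, Finset.mem_union, Finset.mem_univ, true_and]
    constructor
    · intro h
      rcases lt_or_ge (i : ℕ) k with h1 | h1
      · exact Or.inl ⟨h1, h⟩
      · rcases lt_or_ge (i : ℕ) M with h2 | h2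
        · exact absurd h (hnotfix i h1 h2)
        · exact Or.inr h2
    · rintro (⟨_, h⟩ | h)
      · exact h
      · exact hfix i h
  have hdisj : Disjoint (Finset.univ.filter fun i : Fin n => (i : ℕ) < k ∧ π i = i)
      (Finset.univ.filter fun i : Fin n => M ≤ (i : ℕ)) := by
    rw [Finset.disjoint_left]
    intro i hi1 hi2
    simp only [Finset.mem_filter, Finset.mem_univ, true_and] at hi1 hi2
    omega
  rw [fixedPointCount, hsplit, Finset.card_union_of_disjoint hdisj, card_filter_ge n M hMn,
    fixedFirst]
  omega

lemma unifProb_eq {α : Type*} [Fintype α] (p : α → Prop) [DecidablePred p] :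
    unifProb p = ((Finset.univ.filter p).card : ℝ) / (Fintype.card α : ℝ) := by
  rw [unifProb, Nat.card_eq_fintype_card, Fintype.card_subtype]

lemma distinctCount_eq {n r : ℕ} (s : Fin r → Fin n) :
    distinctCount n r s = (List.ofFn s).dedup.length := by
  rw [distinctCount, ← List.card_toFinset]
  congr 1
  ext x
  simp [List.mem_ofFn, eq_comm]

lemma distinctCount_le {n r : ℕ} (s : Fin r → Fin n) : distinctCount n r s ≤ n := by
  calc distinctCount n r s ≤ (Finset.univ : Finset (Fin n)).card :=
        Finset.card_le_card (Finset.subset_univ _)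
    _ = n := by simp

lemma distinctCount_comp {n r : ℕ} (σ : Equiv.Perm (Fin n)) (s : Fin r → Fin n) :
    distinctCount n r (⇑σ ∘ s) = distinctCount n r s := by
  rw [distinctCount, distinctCount, ← Finset.image_image, Finset.card_image_of_injective _ σ.injective]

lemma rtt_mono {n r : ℕ} (s : Fin r → Fin n) (i j : Fin n)
    (hi : distinctCount n r s ≤ (i : ℕ)) (hij : i < j) :
    rttPerm n r s i < rttPerm n r s j := by
  have hk : distinctCount n r s = (List.ofFn s).dedup.reverse.length := by
    rw [distinctCount_eq, List.length_reverse]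
  rw [rttPerm_apply, rttPerm_apply]
  simp only [deckList]
  rw [List.getElem_append_right (by omega : (List.ofFn s).dedup.reverse.length ≤ (i:ℕ)),
    List.getElem_append_right (by rw [← hk]; omega)]
  have hij' : (i : ℕ) - (List.ofFn s).dedup.reverse.length
      < (j : ℕ) - (List.ofFn s).dedup.reverse.length := by
    rw [← hk]
    rw [Fin.lt_def] at hij
    omega
  exact Finset.sortedLT_sort _ (show (⟨_, _⟩ : Fin _) < ⟨_, _⟩ from hij')

lemma rtt_head_comp {n r : ℕ} (σ : Equiv.Perm (Fin n)) (s : Fin r → Fin n) (i : Fin n)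
    (hi : (i : ℕ) < distinctCount n r s) :
    rttPerm n r (⇑σ ∘ s) i = σ (rttPerm n r s i) := by
  have hmap : List.ofFn (⇑σ ∘ s) = (List.ofFn s).map σ := (List.map_ofFn (f := s) (g := ⇑σ)).symm
  have hk : (i : ℕ) < (List.ofFn s).dedup.reverse.length := by
    rw [List.length_reverse, ← distinctCount_eq]; exact hi
  have hk2 : (i : ℕ) < ((List.ofFn (⇑σ ∘ s)).dedup.reverse).length := by
    rw [hmap, map_dedup σ.injective, List.length_reverse, List.length_map]
    rw [List.length_reverse] at hk
    exact hk
  rw [rttPerm_apply, rttPerm_apply]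
  simp only [deckList]
  rw [List.getElem_append_left hk2, List.getElem_append_left hk]
  have hlist : (List.ofFn (⇑σ ∘ s)).dedup.reverse = ((List.ofFn s).dedup.reverse).map σ := by
    rw [hmap, map_dedup σ.injective, List.map_reverse]
  rw [List.getElem_of_eq hlist, List.getElem_map]

lemma stat_rtt {n r : ℕ} (s : Fin r → Fin n) :
    fixedPointCount (rttPerm n r s)
      = n - maxFirst n (distinctCount n r s) (rttPerm n r s)
        + fixedFirst n (distinctCount n r s) (rttPerm n r s) :=
  fp_decomp _ _ (distinctCount_le s) (rtt_mono s)

lemma maxFirst_congr {n : ℕ} (k : ℕ) (π₁ π₂ : Equiv.Perm (Fin n))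
    (h : ∀ i : Fin n, (i : ℕ) < k → π₁ i = π₂ i) : maxFirst n k π₁ = maxFirst n k π₂ := by
  rw [maxFirst, maxFirst]
  apply Finset.sup_congr rfl
  intro i hi
  rw [h i (by simpa using hi)]

lemma fixedFirst_congr {n : ℕ} (k : ℕ) (π₁ π₂ : Equiv.Perm (Fin n))
    (h : ∀ i : Fin n, (i : ℕ) < k → π₁ i = π₂ i) : fixedFirst n k π₁ = fixedFirst n k π₂ := by
  rw [fixedFirst, fixedFirst]
  congr 1
  apply Finset.filter_congr
  intro i _
  constructor
  · rintro ⟨h1, h2⟩; exact ⟨h1, by rw [← h i h1, h2]⟩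
  · rintro ⟨h1, h2⟩; exact ⟨h1, by rw [h i h1, h2]⟩

/-- **Theorem (decomposition of fixed points).** For `n ≥ 1`, `r ≥ 1`, the number of fixed
points after `r` iterated random-to-top shuffles is equal in distribution to
`n - max_{1 ≤ i ≤ K} π(i) + Σ_{i=1}^{K} 1(π(i) = i)`, where `π` is a uniformly random
permutation of `[n]` and `K` is the (independent) number of distinct values among `r`
i.i.d. uniform samples from `[n]` (here the pair `(s, π)` is uniform on the product). -/
theorem rtt_fixedPoints_decomposition (n r : ℕ) (hn : 1 ≤ n) (hr : 1 ≤ r) (m : ℕ) :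
    unifProb (fun s : Fin r → Fin n => fixedPointCount (rttPerm n r s) = m) =
      unifProb (fun x : (Fin r → Fin n) × Equiv.Perm (Fin n) =>
        n - maxFirst n (distinctCount n r x.1) x.2 +
          fixedFirst n (distinctCount n r x.1) x.2 = m) := by
  classical
  rw [unifProb_eq, unifProb_eq]
  have key : ((Finset.univ.filter fun x : (Fin r → Fin n) × Equiv.Perm (Fin n) =>
        n - maxFirst n (distinctCount n r x.1) x.2 +
          fixedFirst n (distinctCount n r x.1) x.2 = m).card : ℕ)
      = (Finset.univ.filter fun s : Fin r → Fin n =>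
          fixedPointCount (rttPerm n r s) = m).card * (Nat.factorial n) := by
    rw [Finset.card_filter, Finset.card_filter, Fintype.sum_prod_type]
    have step1 : ∀ s : Fin r → Fin n,
        (∑ π : Equiv.Perm (Fin n), if n - maxFirst n (distinctCount n r s) π
            + fixedFirst n (distinctCount n r s) π = m then 1 else 0)
        = ∑ σ : Equiv.Perm (Fin n),
            if fixedPointCount (rttPerm n r (⇑σ ∘ s)) = m then (1:ℕ) else 0 := by
      intro s
      rw [← Equiv.sum_comp (Equiv.mulRight (rttPerm n r s))
        (fun π => if n - maxFirst n (distinctCount n r s) π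
            + fixedFirst n (distinctCount n r s) π = m then (1:ℕ) else 0)]
      apply Finset.sum_congr rfl
      intro σ _
      have hagree : ∀ i : Fin n, (i : ℕ) < distinctCount n r s →
          (Equiv.mulRight (rttPerm n r s) σ) i = rttPerm n r (⇑σ ∘ s) i := by
        intro i hi
        rw [rtt_head_comp σ s i hi]
        rfl
      rw [maxFirst_congr _ _ _ hagree, fixedFirst_congr _ _ _ hagree,
        ← distinctCount_comp σ s, ← stat_rtt]
    rw [Finset.sum_congr rfl fun s _ => step1 s, Finset.sum_comm]
    have step2 : ∀ σ : Equiv.Perm (Fin n),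
        (∑ s : Fin r → Fin n, if fixedPointCount (rttPerm n r (⇑σ ∘ s)) = m then (1:ℕ) else 0)
        = ∑ s : Fin r → Fin n, if fixedPointCount (rttPerm n r s) = m then (1:ℕ) else 0 := by
      intro σ
      exact Equiv.sum_comp (Equiv.piCongrRight fun _ : Fin r => σ)
        (fun s => if fixedPointCount (rttPerm n r s) = m then (1:ℕ) else 0)
    rw [Finset.sum_congr rfl fun σ _ => step2 σ, Finset.sum_const, Finset.card_univ,
      Fintype.card_perm, Fintype.card_fin, smul_eq_mul, mul_comm]
  rw [key]
  have hcard1 : (Fintype.card (Fin r → Fin n) : ℝ) = (n : ℝ) ^ r := by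
    rw [Fintype.card_fun, Fintype.card_fin, Fintype.card_fin]; push_cast; ring
  have hcard2 : (Fintype.card ((Fin r → Fin n) × Equiv.Perm (Fin n)) : ℝ)
      = (n : ℝ) ^ r * (Nat.factorial n : ℝ) := by
    rw [Fintype.card_prod, Fintype.card_perm, Fintype.card_fin, Fintype.card_fun,
      Fintype.card_fin, Fintype.card_fin]
    push_cast; ring
  rw [hcard1, hcard2, Nat.cast_mul]
  rw [mul_div_mul_right _ _ (by positivity : (Nat.factorial n : ℝ) ≠ 0)]
end

section
/- Let n ≥ 1 and r ≥ 1 be integers and let k ∈ [n]. Let Π^r_n be the random permutation of [n] obtained by performing r iterated random-to-top shuffles starting from the identity, and let W^r_k be the event that Π^r_n(k) = k (card k is in position k after the r shuffles). Let K^r_n be the number of distinct values among r i.i.d. uniform samples from [n]. Then P(W^r_k) = ((k−1)/n)^r + P(K^r_n ≥ k)/n. -/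
open MeasureTheory ProbabilityTheory Filter Finset Topology
open scoped NNReal

def afterLast {α : Type*} [DecidableEq α] (c : α) : List α → List α
  | [] => []
  | a :: l => if a = c ∧ c ∉ l then l else afterLast c l

lemma afterLast_append {α : Type*} [DecidableEq α] (c : α) (l₁ l₂ : List α) (h : c ∉ l₂) :
    afterLast c (l₁ ++ c :: l₂) = l₂ := by
  induction l₁ with
  | nil => simp [afterLast, h]
  | cons a l ih =>
      have : c ∈ l ++ c :: l₂ := by simp
      simp only [List.cons_append, afterLast, this]
      simpa using ih

lemma moveToTop_inv_apply {n : ℕ} (a : Fin n) (π : Equiv.Perm (Fin n)) (x : Fin n) :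
    (moveToTop a π)⁻¹ x = (π⁻¹ a).cycleRange (π⁻¹ x) := by
  simp [moveToTop, mul_inv_rev, Equiv.Perm.mul_apply]

lemma cycleRange_val {n : ℕ} (p q : Fin n) :
    ((p.cycleRange q : Fin n) : ℕ) = if q = p then 0 else if (q:ℕ) < (p:ℕ) then (q:ℕ) + 1 else (q:ℕ) := by
  cases n with
  | zero => exact p.elim0
  | succ m =>
    rcases lt_trichotomy q p with h | h | h
    · have h' : (q:ℕ) < (p:ℕ) := h
      rw [Fin.coe_cycleRange_of_lt h, if_neg h.ne, if_pos h']
    · subst h; simp [Fin.cycleRange_self]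
    · have h' : (p:ℕ) < (q:ℕ) := h
      rw [Fin.cycleRange_of_gt h, if_neg h.ne', if_neg (by omega)]

lemma pos_foldl {n : ℕ} (c : Fin n) :
    ∀ (l : List (Fin n)) (π0 : Equiv.Perm (Fin n)),
    (((l.foldl (fun π a => moveToTop a π) π0)⁻¹ c : Fin n) : ℕ) =
    if c ∈ l then (afterLast c l).toFinset.card
    else (π0⁻¹ c : ℕ) + ((l.toFinset.filter fun v => ((π0⁻¹ c : Fin n) : ℕ) < ((π0⁻¹ v : Fin n) : ℕ)).card) := by
  intro l
  induction l with
  | nil => intro π0; simp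
  | cons a l ih =>
    intro π0
    set π1 := moveToTop a π0 with hπ1
    have step : (a :: l).foldl (fun π a => moveToTop a π) π0 = l.foldl (fun π a => moveToTop a π) π1 := rfl
    have hval : ∀ x : Fin n, ((π1⁻¹ x : Fin n) : ℕ) =
        if x = a then 0 else if ((π0⁻¹ x : Fin n):ℕ) < ((π0⁻¹ a : Fin n):ℕ) then ((π0⁻¹ x : Fin n):ℕ) + 1 else ((π0⁻¹ x : Fin n):ℕ) := by
      intro x
      rw [hπ1, moveToTop_inv_apply, cycleRange_val]
      by_cases hx : x = a
      · rw [if_pos (by rw [hx]), if_pos hx]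
      · rw [if_neg (by simpa using hx), if_neg hx]
    have hne0 : ∀ x : Fin n, x ≠ a → 0 < ((π1⁻¹ x : Fin n) : ℕ) := by
      intro x hx
      rw [hval x, if_neg hx]
      have : ((π0⁻¹ x : Fin n):ℕ) ≠ ((π0⁻¹ a : Fin n):ℕ) := by
        simp [Fin.val_eq_val, EmbeddingLike.apply_eq_iff_eq, hx]
      split <;> omega
    have hmono : ∀ x y : Fin n, x ≠ a → y ≠ a →
        (((π1⁻¹ x : Fin n):ℕ) < ((π1⁻¹ y : Fin n):ℕ) ↔ ((π0⁻¹ x : Fin n):ℕ) < ((π0⁻¹ y : Fin n):ℕ)) := by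
      intro x y hx hy
      have hxa : ((π0⁻¹ x : Fin n):ℕ) ≠ ((π0⁻¹ a : Fin n):ℕ) := by
        simp [Fin.val_eq_val, EmbeddingLike.apply_eq_iff_eq, hx]
      have hya : ((π0⁻¹ y : Fin n):ℕ) ≠ ((π0⁻¹ a : Fin n):ℕ) := by
        simp [Fin.val_eq_val, EmbeddingLike.apply_eq_iff_eq, hy]
      rw [hval x, hval y, if_neg hx, if_neg hy]
      split <;> split <;> omega
    rw [step, ih π1]
    by_cases hcl : c ∈ l
    · rw [if_pos hcl, if_pos (List.mem_cons_of_mem a hcl)]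
      have : afterLast c (a :: l) = afterLast c l := by
        simp [afterLast, hcl]
      rw [this]
    · by_cases hca : c = a
      · subst hca
        rw [if_neg hcl, if_pos List.mem_cons_self]
        have h1 : afterLast c (c :: l) = l := by simp [afterLast, hcl]
        rw [h1, hval c, if_pos rfl]
        have : (l.toFinset.filter fun v => (0:ℕ) < ((π1⁻¹ v : Fin n) : ℕ)) = l.toFinset := by
          apply Finset.filter_true_of_mem
          intro v hv
          exact hne0 v (fun h => hcl (h ▸ (List.mem_toFinset.mp hv)))
        rw [this]
        simp
      · rw [if_neg hcl, if_neg (by simp [hca, hcl])]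
        have hflt : (l.toFinset.filter fun v => ((π1⁻¹ c : Fin n):ℕ) < ((π1⁻¹ v : Fin n) : ℕ))
            = ((a :: l).toFinset.filter fun v => ((π0⁻¹ c : Fin n):ℕ) < ((π0⁻¹ v : Fin n) : ℕ)) \ {a} := by
          ext v
          simp only [Finset.mem_filter, List.mem_toFinset, Finset.mem_sdiff, Finset.mem_singleton,
            List.mem_cons]
          constructor
          · intro ⟨hv, hlt⟩
            have hva : v ≠ a := by
              rintro rfl
              rw [hval v, if_pos rfl] at hlt; omega
            exact ⟨⟨Or.inr hv, (hmono c v hca hva).mp hlt⟩, hva⟩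
          · rintro ⟨⟨hv | hv, hlt⟩, hva⟩
            · exact absurd hv hva
            · exact ⟨hv, (hmono c v hca hva).mpr hlt⟩
        rw [hflt]
        rw [hval c, if_neg hca]
        by_cases hlt : ((π0⁻¹ c : Fin n):ℕ) < ((π0⁻¹ a : Fin n):ℕ)
        · rw [if_pos hlt]
          have ha : a ∈ (a :: l).toFinset.filter fun v => ((π0⁻¹ c : Fin n):ℕ) < ((π0⁻¹ v : Fin n) : ℕ) :=
            Finset.mem_filter.mpr ⟨by simp, hlt⟩
          rw [Finset.card_sdiff_of_subset (by simpa using ha)]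
          have := Finset.card_pos.mpr ⟨a, ha⟩
          simp only [Finset.card_singleton]
          omega
        · rw [if_neg hlt]
          have ha : a ∉ (a :: l).toFinset.filter fun v => ((π0⁻¹ c : Fin n):ℕ) < ((π0⁻¹ v : Fin n) : ℕ) :=
            fun hm => hlt (Finset.mem_filter.mp hm).2
          rw [Finset.sdiff_singleton_eq_erase, Finset.erase_eq_of_notMem ha]

lemma afterLast_ofFn {n r : ℕ} (s : Fin r → Fin n) (c : Fin n) (t : Fin r)
    (ht : s t = c) (ht' : ∀ u, t < u → s u ≠ c) :
    afterLast c (List.ofFn s) = (List.ofFn s).drop ((t : ℕ) + 1) := by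
  have hlen : (t : ℕ) < (List.ofFn s).length := by simp [t.isLt]
  have hsplit : List.ofFn s = (List.ofFn s).take t ++ c :: (List.ofFn s).drop ((t : ℕ) + 1) := by
    conv_lhs => rw [← List.take_append_drop (t : ℕ) (List.ofFn s)]
    rw [List.drop_eq_getElem_cons hlen]
    simp [ht]
  have hnot : c ∉ (List.ofFn s).drop ((t : ℕ) + 1) := by
    intro hmem
    obtain ⟨i, hi, heq⟩ := List.mem_iff_getElem.mp hmem
    simp only [List.length_drop, List.length_ofFn] at hi
    rw [List.getElem_drop, List.getElem_ofFn] at heq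
    exact ht' ⟨(t:ℕ)+1+i, by omega⟩ (by simp [Fin.lt_def]; omega) heq
  conv_lhs => rw [hsplit]
  exact afterLast_append c _ _ hnot

lemma drop_ofFn_toFinset {n r : ℕ} (s : Fin r → Fin n) (t : Fin r) :
    ((List.ofFn s).drop ((t : ℕ) + 1)).toFinset = (univ.filter fun u : Fin r => t < u).image s := by
  ext x
  simp only [List.mem_toFinset, List.mem_iff_getElem, Finset.mem_image, Finset.mem_filter,
    Finset.mem_univ, true_and, List.getElem_drop, List.getElem_ofFn, List.length_drop,
    List.length_ofFn]
  constructor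
  · rintro ⟨i, hi, rfl⟩
    exact ⟨⟨(t:ℕ) + 1 + i, by omega⟩, by simp [Fin.lt_def]; omega, rfl⟩
  · rintro ⟨u, hu, rfl⟩
    have hu' : (t : ℕ) < (u : ℕ) := hu
    refine ⟨(u : ℕ) - ((t:ℕ) + 1), by omega, ?_⟩
    congr 1
    exact Fin.ext (by simp; omega)

lemma event_char (n r k : ℕ) (hn : 1 ≤ n) (hk : 1 ≤ k) (hkn : k ≤ n) (s : Fin r → Fin n) :
    rttPerm n r s ⟨k-1, by omega⟩ = ⟨k-1, by omega⟩ ↔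
    ((∀ i, (s i : ℕ) < k - 1) ∨
     ∃ t : Fin r, s t = ⟨k-1, by omega⟩ ∧ (∀ u, t < u → s u ≠ ⟨k-1, by omega⟩) ∧
       (((univ.filter fun u => t < u).image s).card = k - 1)) := by
  set c : Fin n := ⟨k-1, by omega⟩ with hc
  have h1 : rttPerm n r s c = c ↔ (rttPerm n r s)⁻¹ c = c := by
    constructor
    · intro h; conv_lhs => rw [← h]
      simp
    · intro h; conv_lhs => rw [← h]
      simp
  have h2 : ((rttPerm n r s)⁻¹ c = c) ↔ (((rttPerm n r s)⁻¹ c : Fin n) : ℕ) = k - 1 := by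
    rw [Fin.ext_iff]
  rw [h1, h2, rttPerm, pos_foldl]
  by_cases hmem : c ∈ List.ofFn s
  · rw [if_pos hmem]
    obtain ⟨t0, ht0⟩ := List.mem_ofFn.mp hmem
    -- last occurrence
    have hne : (univ.filter fun i => s i = c).Nonempty := ⟨t0, by simp [ht0]⟩
    set t := (univ.filter fun i => s i = c).max' hne with htdef
    have htc : s t = c := (Finset.mem_filter.mp ((univ.filter fun i => s i = c).max'_mem hne)).2
    have htlast : ∀ u, t < u → s u ≠ c := by
      intro u hu hsc
      exact absurd (Finset.le_max' _ u (by simp [hsc])) (not_le.mpr hu)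
    constructor
    · intro hcard
      refine Or.inr ⟨t, htc, htlast, ?_⟩
      rw [← hcard, afterLast_ofFn s c t htc htlast, drop_ofFn_toFinset]
    · rintro (hall | ⟨t', ht'c, ht'last, hcard⟩)
      · exact absurd ht0 (fun h => by have := hall t0; rw [h] at this; exact Nat.lt_irrefl _ this)
      · have htt' : t' = t := by
          have h1 : t' ≤ t := Finset.le_max' _ t' (by simp [ht'c])
          rcases eq_or_lt_of_le h1 with h | h
          · exact h
          · exact absurd htc (ht'last t h)
        rw [afterLast_ofFn s c t htc htlast, drop_ofFn_toFinset, ← htt', hcard]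
  · rw [if_neg hmem]
    have hval : ∀ x : Fin n, ((1 : Equiv.Perm (Fin n))⁻¹ x) = x := fun x => rfl
    simp only [hval, hc]
    constructor
    · intro h
      left
      intro i
      have hcard0 : ((List.ofFn s).toFinset.filter fun v => k - 1 < ((v : Fin n) : ℕ)).card = 0 := by omega
      have hnotin : s i ∉ (List.ofFn s).toFinset.filter fun v => k - 1 < ((v : Fin n) : ℕ) := by
        rw [Finset.card_eq_zero.mp hcard0]; exact Finset.notMem_empty _
      have hle : ¬ (k - 1 < ((s i : Fin n) : ℕ)) := by
        intro hgt
        exact hnotin (Finset.mem_filter.mpr ⟨by simp [List.mem_ofFn], hgt⟩)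
      have hne : s i ≠ c := fun h' => hmem (List.mem_ofFn.mpr ⟨i, h'⟩)
      have : ((s i : Fin n) : ℕ) ≠ k - 1 := by
        intro hv; exact hne (Fin.ext hv)
      omega
    · rintro (hall | ⟨t', ht'c, _, _⟩)
      · have : ((List.ofFn s).toFinset.filter fun v => k - 1 < ((v : Fin n) : ℕ)) = ∅ := by
          rw [Finset.eq_empty_iff_forall_notMem]
          intro v hv
          rw [Finset.mem_filter, List.mem_toFinset, List.mem_ofFn] at hv
          obtain ⟨⟨i, rfl⟩, hgt⟩ := hv
          exact absurd (hall i) (by omega)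
        rw [this]
        simp
      · exact absurd (List.mem_ofFn.mpr ⟨t', ht'c⟩) hmem

section Counting
variable {n r : ℕ}

/-- last occurrence index (as ℕ) of value `c` in `s`. -/
def lastT (c : Fin n) (s : Fin r → Fin n) : ℕ :=
  (univ.filter fun i => s i = c).sup Fin.val

/-- the set of indices `j` such that `s'` restricted to `{0..j}` has at least `k` distinct values. -/
def occB (k : ℕ) (s' : Fin r → Fin n) : Finset (Fin r) :=
  univ.filter fun j => k ≤ ((univ.filter fun u : Fin r => (u : ℕ) ≤ (j : ℕ)).image s').card

/-- first index at which `s'` has accumulated `k` distinct values. -/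
def firstJ (k : ℕ) (s' : Fin r → Fin n) : ℕ :=
  if h : (occB k s').Nonempty then (((occB k s').min' h : Fin r) : ℕ) else 0

lemma firstJ_lt (k : ℕ) (s' : Fin r → Fin n) (hr : 0 < r) : firstJ k s' < r := by
  unfold firstJ
  split
  · exact Fin.isLt _
  · exact hr

lemma lastT_spec (c : Fin n) (s : Fin r → Fin n) (t : Fin r)
    (ht : s t = c) (ht' : ∀ u, t < u → s u ≠ c) : lastT c s = (t : ℕ) := by
  have h1 : (t : ℕ) ≤ lastT c s := Finset.le_sup (f := Fin.val) (by simp [ht])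
  have hne : (univ.filter fun i => s i = c).Nonempty := ⟨t, by simp [ht]⟩
  obtain ⟨b, hb, hbs⟩ := Finset.exists_mem_eq_sup _ hne Fin.val
  rw [Finset.mem_filter] at hb
  have h2 : lastT c s = (b : ℕ) := hbs
  rcases lt_or_eq_of_le h1 with h | h
  · exact absurd hb.2 (ht' b (by rw [Fin.lt_def]; omega))
  · omega

lemma firstJ_spec (k : ℕ) (hk : 1 ≤ k) (s' : Fin r → Fin n)
    (hB : k ≤ (univ.image s').card) :
    k ≤ ((univ.filter fun u : Fin r => (u : ℕ) ≤ firstJ k s').image s').card ∧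
    (∀ m : ℕ, m < firstJ k s' → ((univ.filter fun u : Fin r => (u : ℕ) ≤ m).image s').card < k) := by
  have hr : 0 < r := by
    rcases Nat.eq_zero_or_pos r with h | h
    · subst h
      simp only [Finset.univ_eq_empty, Finset.image_empty, Finset.card_empty] at hB; omega
    · exact h
  have hlast : (⟨r - 1, by omega⟩ : Fin r) ∈ occB k s' := by
    unfold occB
    rw [Finset.mem_filter]
    refine ⟨mem_univ _, ?_⟩
    have : (univ.filter fun u : Fin r => (u : ℕ) ≤ ((⟨r - 1, by omega⟩ : Fin r) : ℕ)) = univ := by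
      apply Finset.filter_true_of_mem
      intro u _
      have := u.isLt
      simp only []
      omega
    rw [this]
    exact hB
  have hne : (occB k s').Nonempty := ⟨_, hlast⟩
  constructor
  · rw [firstJ, dif_pos hne]
    have := (occB k s').min'_mem hne
    unfold occB at this
    rw [Finset.mem_filter] at this
    exact this.2
  · intro m hm
    by_contra hcon
    push_neg at hcon
    have hmr : m < r := by have := firstJ_lt k s' hr; omega
    have hjm : (⟨m, hmr⟩ : Fin r) ∈ occB k s' := by
      unfold occB
      rw [Finset.mem_filter]
      exact ⟨mem_univ _, hcon⟩
    have hle : (occB k s').min' hne ≤ ⟨m, hmr⟩ := Finset.min'_le _ _ hjm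
    rw [firstJ, dif_pos hne] at hm
    rw [Fin.le_def] at hle
    simp only [] at hle
    omega

lemma firstJ_detail (k : ℕ) (hk : 1 ≤ k) (s' : Fin r → Fin n)
    (hB : k ≤ (univ.image s').card) (hr : 0 < r) :
    ((univ.filter fun u : Fin r => (u : ℕ) < firstJ k s').image s').card = k - 1 ∧
    s' ⟨firstJ k s', firstJ_lt k s' hr⟩ ∉ (univ.filter fun u : Fin r => (u : ℕ) < firstJ k s').image s' ∧
    ((univ.filter fun u : Fin r => (u : ℕ) ≤ firstJ k s').image s').card = k := by
  obtain ⟨hub, hmin⟩ := firstJ_spec k hk s' hB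
  set j := firstJ k s' with hj
  have hjr : j < r := firstJ_lt k s' hr
  set P := (univ.filter fun u : Fin r => (u : ℕ) < j).image s' with hP
  set Q := (univ.filter fun u : Fin r => (u : ℕ) ≤ j).image s' with hQ
  have hQP : Q = insert (s' ⟨j, hjr⟩) P := by
    ext x
    simp only [hP, hQ, Finset.mem_insert, Finset.mem_image, Finset.mem_filter, Finset.mem_univ,
      true_and]
    constructor
    · rintro ⟨u, hu, rfl⟩
      rcases Nat.lt_or_ge (u : ℕ) j with h | h
      · exact Or.inr ⟨u, h, rfl⟩
      · left; congr 1; apply Fin.ext; show (u : ℕ) = j; omega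
    · rintro (rfl | ⟨u, hu, rfl⟩)
      · exact ⟨_, le_refl _, rfl⟩
      · exact ⟨u, by omega, rfl⟩
  have hPle : P.card ≤ k - 1 := by
    rcases Nat.eq_zero_or_pos j with h0 | h0
    · have : (univ.filter fun u : Fin r => (u : ℕ) < j) = ∅ := by
        rw [Finset.eq_empty_iff_forall_notMem]; intro u hu
        rw [Finset.mem_filter] at hu; omega
      rw [hP, this]; simp
    · have h1 := hmin (j - 1) (by omega)
      have h2 : (univ.filter fun u : Fin r => (u : ℕ) < j) =
          (univ.filter fun u : Fin r => (u : ℕ) ≤ j - 1) := by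
        apply Finset.filter_congr; intro u _; constructor <;> (intro; omega)
      rw [hP, h2]; omega
  have hQle : Q.card ≤ P.card + 1 := by rw [hQP]; exact Finset.card_insert_le _ _
  have hQk : Q.card = k := by omega
  have hnotin : s' ⟨j, hjr⟩ ∉ P := by
    intro hmem
    rw [hQP, Finset.insert_eq_of_mem hmem] at hQk
    omega
  exact ⟨by omega, hnotin, hQk⟩

/-- forward map of the bijection: `(a, s) ↦ s'`. -/
def fwd (c a : Fin n) (s : Fin r → Fin n) : Fin r → Fin n := fun i =>
  if (i : ℕ) < r - 1 - lastT c s then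
    Equiv.swap a c (s ⟨r - 1 - (i : ℕ), by have := i.isLt; omega⟩)
  else if (i : ℕ) = r - 1 - lastT c s then a
  else s ⟨(i : ℕ) - (r - 1 - lastT c s) - 1, by have := i.isLt; omega⟩

/-- backward map of the bijection: `s' ↦ s` (the `a` component is `s' (firstJ)`). -/
def bwd (k : ℕ) (c : Fin n) (s' : Fin r → Fin n) : Fin r → Fin n := fun i =>
  if h : (i : ℕ) < r - 1 - firstJ k s' then
    s' ⟨(i : ℕ) + firstJ k s' + 1, by omega⟩
  else if (i : ℕ) = r - 1 - firstJ k s' then c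
  else Equiv.swap (s' ⟨firstJ k s', firstJ_lt k s' (by have := i.isLt; omega)⟩) c
    (s' ⟨r - 1 - (i : ℕ), by have := i.isLt; omega⟩)

lemma image_rev (t : Fin r) (f g : Fin r → Fin n)
    (h : ∀ i : Fin r, (i : ℕ) < r - 1 - (t : ℕ) →
      g i = f ⟨r - 1 - (i : ℕ), by have := i.isLt; omega⟩) :
    (univ.filter fun i : Fin r => (i : ℕ) < r - 1 - (t : ℕ)).image g
      = (univ.filter fun u : Fin r => t < u).image f := by
  have htr := t.isLt
  ext x
  simp only [mem_image, mem_filter, mem_univ, true_and]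
  constructor
  · rintro ⟨i, hi, rfl⟩
    have hir := i.isLt
    refine ⟨⟨r - 1 - (i : ℕ), by omega⟩, ?_, (h i hi).symm⟩
    rw [Fin.lt_def]
    show (t : ℕ) < r - 1 - (i : ℕ)
    omega
  · rintro ⟨u, hu, rfl⟩
    have hu' : (t : ℕ) < (u : ℕ) := hu
    have hur := u.isLt
    refine ⟨⟨r - 1 - (u : ℕ), by omega⟩, by show r - 1 - (u : ℕ) < r - 1 - (t : ℕ); omega, ?_⟩
    rw [h _ (by show r - 1 - (u : ℕ) < r - 1 - (t : ℕ); omega)]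
    congr 1
    apply Fin.ext
    show r - 1 - (r - 1 - (u : ℕ)) = (u : ℕ)
    omega

lemma image_le_eq_insert (f : Fin r → Fin n) (m : ℕ) (hm : m < r) :
    (univ.filter fun u : Fin r => (u : ℕ) ≤ m).image f
      = insert (f ⟨m, hm⟩) ((univ.filter fun u : Fin r => (u : ℕ) < m).image f) := by
  ext x
  simp only [Finset.mem_insert, Finset.mem_image, Finset.mem_filter, Finset.mem_univ, true_and]
  constructor
  · rintro ⟨u, hu, rfl⟩
    rcases Nat.lt_or_ge (u : ℕ) m with h | h
    · exact Or.inr ⟨u, h, rfl⟩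
    · left; congr 1; apply Fin.ext; show (u : ℕ) = m; omega
  · rintro (rfl | ⟨u, hu, rfl⟩)
    · exact ⟨_, le_refl _, rfl⟩
    · exact ⟨u, by omega, rfl⟩

section Obligations
variable (k : ℕ) (c a : Fin n) (s : Fin r → Fin n) (t : Fin r)

lemma fwd_lt_apply (ht : lastT c s = (t : ℕ)) (i : Fin r) (hi : (i : ℕ) < r - 1 - (t : ℕ)) :
    fwd c a s i = Equiv.swap a c (s ⟨r - 1 - (i : ℕ), by have := i.isLt; omega⟩) := by
  rw [fwd]
  split_ifs with h1 h2
  · rfl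
  · rw [ht] at h1; omega
  · rw [ht] at h1; omega

lemma fwd_eq_apply (ht : lastT c s = (t : ℕ)) (i : Fin r) (hi : (i : ℕ) = r - 1 - (t : ℕ)) :
    fwd c a s i = a := by
  rw [fwd]
  split_ifs with h1 h2
  · rw [ht] at h1; omega
  · rfl
  · rw [ht] at h2; omega

lemma fwd_gt_apply (ht : lastT c s = (t : ℕ)) (i : Fin r) (hi : r - 1 - (t : ℕ) < (i : ℕ)) :
    fwd c a s i = s ⟨(i : ℕ) - (r - 1 - (t : ℕ)) - 1, by have := i.isLt; omega⟩ := by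
  rw [fwd]
  split_ifs with h1 h2
  · rw [ht] at h1; omega
  · rw [ht] at h2; omega
  · congr 1
    apply Fin.ext
    show (i : ℕ) - (r - 1 - lastT c s) - 1 = (i : ℕ) - (r - 1 - (t : ℕ)) - 1
    rw [ht]

lemma fwd_image_lt (ht : lastT c s = (t : ℕ)) :
    (univ.filter fun i : Fin r => (i : ℕ) < r - 1 - (t : ℕ)).image (fwd c a s)
      = Finset.image (Equiv.swap a c) ((univ.filter fun u : Fin r => t < u).image s) := by
  rw [Finset.image_image]
  exact image_rev t _ _ (fun i hi => fwd_lt_apply c a s t ht i hi)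

lemma fwd_card_image_lt (hk : 1 ≤ k)
    (ht : lastT c s = (t : ℕ))
    (hcard : ((univ.filter fun u : Fin r => t < u).image s).card = k - 1) :
    ((univ.filter fun i : Fin r => (i : ℕ) < r - 1 - (t : ℕ)).image (fwd c a s)).card = k - 1 := by
  rw [fwd_image_lt c a s t ht, Finset.card_image_of_injective _ (Equiv.swap a c).injective,
    hcard]

lemma fwd_a_notin (ht' : ∀ u, t < u → s u ≠ c) (ht : lastT c s = (t : ℕ)) :
    a ∉ (univ.filter fun i : Fin r => (i : ℕ) < r - 1 - (t : ℕ)).image (fwd c a s) := by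
  rw [fwd_image_lt c a s t ht]
  intro hmem
  rw [Finset.mem_image] at hmem
  obtain ⟨x, hx, hax⟩ := hmem
  have hxc : x = c := (Equiv.swap a c).injective (by rw [hax, Equiv.swap_apply_right])
  subst hxc
  rw [Finset.mem_image] at hx
  obtain ⟨u, hu, huc⟩ := hx
  rw [Finset.mem_filter] at hu
  exact ht' u hu.2 huc

lemma fwd_card_image_le (hk : 1 ≤ k)
    (ht : lastT c s = (t : ℕ)) (ht' : ∀ u, t < u → s u ≠ c)
    (hcard : ((univ.filter fun u : Fin r => t < u).image s).card = k - 1) :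
    ((univ.filter fun i : Fin r => (i : ℕ) ≤ r - 1 - (t : ℕ)).image (fwd c a s)).card = k := by
  have htr := t.isLt
  rw [image_le_eq_insert _ _ (by omega),
    fwd_eq_apply c a s t ht _ rfl,
    Finset.card_insert_of_notMem (fwd_a_notin c a s t ht' ht),
    fwd_card_image_lt k c a s t hk ht hcard]
  omega

lemma fwd_mem (hk : 1 ≤ k)
    (ht0 : s t = c) (ht' : ∀ u, t < u → s u ≠ c)
    (hcard : ((univ.filter fun u : Fin r => t < u).image s).card = k - 1) :
    k ≤ (univ.image (fwd c a s)).card := by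
  have ht : lastT c s = (t : ℕ) := lastT_spec c s t ht0 ht'
  have h1 := fwd_card_image_le k c a s t hk ht ht' hcard
  calc k = ((univ.filter fun i : Fin r => (i : ℕ) ≤ r - 1 - (t : ℕ)).image (fwd c a s)).card := h1.symm
    _ ≤ (univ.image (fwd c a s)).card := Finset.card_le_card (Finset.image_subset_image (Finset.filter_subset _ _))

lemma fwd_firstJ (hk : 1 ≤ k)
    (ht0 : s t = c) (ht' : ∀ u, t < u → s u ≠ c)
    (hcard : ((univ.filter fun u : Fin r => t < u).image s).card = k - 1) :
    firstJ k (fwd c a s) = r - 1 - (t : ℕ) := by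
  have htr := t.isLt
  have ht : lastT c s = (t : ℕ) := lastT_spec c s t ht0 ht'
  have hB := fwd_mem k c a s t hk ht0 ht' hcard
  obtain ⟨hub, hmin⟩ := firstJ_spec k hk (fwd c a s) hB
  have hminj : ∀ m : ℕ, m < r - 1 - (t : ℕ) →
      ((univ.filter fun u : Fin r => (u : ℕ) ≤ m).image (fwd c a s)).card < k := by
    intro m hm
    have hsub : (univ.filter fun u : Fin r => (u : ℕ) ≤ m).image (fwd c a s)
        ⊆ (univ.filter fun i : Fin r => (i : ℕ) < r - 1 - (t : ℕ)).image (fwd c a s) := by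
      apply Finset.image_subset_image
      intro u hu
      rw [Finset.mem_filter] at hu ⊢
      exact ⟨hu.1, by omega⟩
    have := Finset.card_le_card hsub
    rw [fwd_card_image_lt k c a s t hk ht hcard] at this
    omega
  rcases Nat.lt_trichotomy (firstJ k (fwd c a s)) (r - 1 - (t : ℕ)) with h | h | h
  · exact absurd hub (by have := hminj _ h; omega)
  · exact h
  · have := hmin _ h
    rw [fwd_card_image_le k c a s t hk ht ht' hcard] at this
    omega

lemma bwd_lt_apply (s' : Fin r → Fin n) (i : Fin r) (hi : (i : ℕ) < r - 1 - firstJ k s') :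
    bwd k c s' i = s' ⟨(i : ℕ) + firstJ k s' + 1, by omega⟩ := by
  rw [bwd, dif_pos hi]

lemma bwd_eq_apply (s' : Fin r → Fin n) (i : Fin r) (hi : (i : ℕ) = r - 1 - firstJ k s') :
    bwd k c s' i = c := by
  rw [bwd, dif_neg (by omega), if_pos hi]

lemma bwd_gt_apply (s' : Fin r → Fin n) (i : Fin r) (hi : r - 1 - firstJ k s' < (i : ℕ))
    (hJ : firstJ k s' < r) :
    bwd k c s' i = Equiv.swap (s' ⟨firstJ k s', hJ⟩) c
      (s' ⟨r - 1 - (i : ℕ), by have := i.isLt; omega⟩) := by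
  rw [bwd, dif_neg (by omega), if_neg (by omega)]

variable (s' : Fin r → Fin n)

lemma bwd_mem (hk : 1 ≤ k) (hB : k ≤ (univ.image s').card) (hr : 0 < r) :
    bwd k c s' ⟨r - 1 - firstJ k s', by omega⟩ = c ∧
    (∀ u, (⟨r - 1 - firstJ k s', by omega⟩ : Fin r) < u → bwd k c s' u ≠ c) ∧
    ((univ.filter fun u : Fin r => (⟨r - 1 - firstJ k s', by omega⟩ : Fin r) < u).image
      (bwd k c s')).card = k - 1 := by
  obtain ⟨hP, hnotin, hQ⟩ := firstJ_detail k hk s' hB hr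
  have hJr : firstJ k s' < r := firstJ_lt k s' hr
  set j := firstJ k s' with hj
  set tF : Fin r := ⟨r - 1 - j, by omega⟩ with htF
  have htFv : (tF : ℕ) = r - 1 - j := rfl
  have h1 : bwd k c s' tF = c := bwd_eq_apply k c s' tF rfl
  have h2 : ∀ u, tF < u → bwd k c s' u ≠ c := by
    intro u hu hc
    have hu' : r - 1 - j < (u : ℕ) := hu
    have hur := u.isLt
    rw [bwd_gt_apply k c s' u hu' hJr] at hc
    have : s' ⟨r - 1 - (u : ℕ), by omega⟩ = s' ⟨j, hJr⟩ :=
      (Equiv.swap _ c).injective (by rw [hc, Equiv.swap_apply_left])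
    apply hnotin
    rw [← this]
    rw [Finset.mem_image]
    exact ⟨⟨r - 1 - (u : ℕ), by omega⟩, by rw [Finset.mem_filter]; exact ⟨mem_univ _, by show r - 1 - (u:ℕ) < j; omega⟩, rfl⟩
  refine ⟨h1, h2, ?_⟩
  have h3 : (univ.filter fun i : Fin r => (i : ℕ) < r - 1 - (tF : ℕ)).image
      (fun i => Equiv.swap (s' ⟨j, hJr⟩) c (s' i)) =
      (univ.filter fun u : Fin r => tF < u).image (bwd k c s') := by
    apply image_rev tF (bwd k c s') (fun i => Equiv.swap (s' ⟨j, hJr⟩) c (s' i))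
    intro i hi
    rw [htFv] at hi
    have hir := i.isLt
    rw [bwd_gt_apply k c s' _ (by show r - 1 - j < r - 1 - (i:ℕ); omega) hJr]
    congr 2
    apply Fin.ext
    show (i : ℕ) = r - 1 - (r - 1 - (i : ℕ))
    omega
  rw [← h3]
  have h4 : (univ.filter fun i : Fin r => (i : ℕ) < r - 1 - (tF : ℕ)) =
      (univ.filter fun i : Fin r => (i : ℕ) < j) := by
    apply Finset.filter_congr
    intro u _
    rw [htFv]
    constructor <;> (intro; omega)
  rw [h4]
  have h5 : (univ.filter fun i : Fin r => (i : ℕ) < j).image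
      (fun i => Equiv.swap (s' ⟨j, hJr⟩) c (s' i)) =
      Finset.image (Equiv.swap (s' ⟨j, hJr⟩) c) ((univ.filter fun i : Fin r => (i : ℕ) < j).image s') := by
    rw [Finset.image_image]
    rfl
  rw [h5, Finset.card_image_of_injective _ (Equiv.swap _ c).injective, hP]

lemma bwd_lastT (hk : 1 ≤ k) (hB : k ≤ (univ.image s').card) (hr : 0 < r) :
    lastT c (bwd k c s') = r - 1 - firstJ k s' := by
  obtain ⟨h1, h2, _⟩ := bwd_mem k c s' hk hB hr
  exact lastT_spec c _ _ h1 h2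

lemma fwd_bwd (hk : 1 ≤ k) (hB : k ≤ (univ.image s').card) (hr : 0 < r) :
    fwd c (s' ⟨firstJ k s', firstJ_lt k s' hr⟩) (bwd k c s') = s' := by
  have hJr : firstJ k s' < r := firstJ_lt k s' hr
  set j := firstJ k s' with hj
  set a : Fin n := s' ⟨j, hJr⟩ with ha
  set tF : Fin r := ⟨r - 1 - j, by omega⟩ with htF
  have hT : lastT c (bwd k c s') = (tF : ℕ) := bwd_lastT k c s' hk hB hr
  have htFv : (tF : ℕ) = r - 1 - j := rfl
  funext i
  have hir := i.isLt
  rcases Nat.lt_trichotomy (i : ℕ) j with h | h | h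
  · rw [fwd_lt_apply c a (bwd k c s') tF hT i (by rw [htFv]; omega)]
    rw [bwd_gt_apply k c s' _ (by show r - 1 - j < r - 1 - (i:ℕ); omega) hJr]
    have : (⟨r - 1 - (r - 1 - (i : ℕ)), by omega⟩ : Fin r) = i := Fin.ext (by show r - 1 - (r - 1 - (i:ℕ)) = (i:ℕ); omega)
    rw [this, ← ha, Equiv.swap_apply_self]
  · rw [fwd_eq_apply c a (bwd k c s') tF hT i (by rw [htFv]; omega)]
    rw [ha]
    congr 1
    exact Fin.ext (by show j = (i : ℕ); omega)
  · rw [fwd_gt_apply c a (bwd k c s') tF hT i (by rw [htFv]; omega)]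
    rw [bwd_lt_apply k c s' _ (by show (i:ℕ) - (r - 1 - (tF:ℕ)) - 1 < r - 1 - j; rw [htFv]; omega)]
    congr 1
    apply Fin.ext
    show (i : ℕ) - (r - 1 - (tF : ℕ)) - 1 + j + 1 = (i : ℕ)
    rw [htFv]
    omega

lemma bwd_fwd (hk : 1 ≤ k) (t : Fin r)
    (ht0 : s t = c) (ht' : ∀ u, t < u → s u ≠ c)
    (hcard : ((univ.filter fun u : Fin r => t < u).image s).card = k - 1) :
    bwd k c (fwd c a s) = s ∧
    (fwd c a s) ⟨firstJ k (fwd c a s), firstJ_lt k _ (by have := t.isLt; omega)⟩ = a := by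
  have htr := t.isLt
  have hT : lastT c s = (t : ℕ) := lastT_spec c s t ht0 ht'
  have hJ : firstJ k (fwd c a s) = r - 1 - (t : ℕ) := fwd_firstJ k c a s t hk ht0 ht' hcard
  constructor
  · funext i
    have hir := i.isLt
    rcases Nat.lt_trichotomy (i : ℕ) (t : ℕ) with h | h | h
    · rw [bwd_lt_apply k c (fwd c a s) i (by rw [hJ]; omega)]
      rw [fwd_gt_apply c a s t hT _ (by show r - 1 - (t:ℕ) < (i:ℕ) + firstJ k (fwd c a s) + 1; rw [hJ]; omega)]
      congr 1
      apply Fin.ext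
      show (i : ℕ) + firstJ k (fwd c a s) + 1 - (r - 1 - (t : ℕ)) - 1 = (i : ℕ)
      rw [hJ]
      omega
    · rw [bwd_eq_apply k c (fwd c a s) i (by rw [hJ]; omega), ← ht0]
      congr 1
      exact Fin.ext h.symm
    · rw [bwd_gt_apply k c (fwd c a s) i (by rw [hJ]; omega) (firstJ_lt k _ (by omega))]
      rw [fwd_eq_apply c a s t hT _ (by show firstJ k (fwd c a s) = r - 1 - (t:ℕ); rw [hJ])]
      rw [fwd_lt_apply c a s t hT _ (by show r - 1 - (i:ℕ) < r - 1 - (t:ℕ); omega)]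
      have : (⟨r - 1 - (r - 1 - (i : ℕ)), by omega⟩ : Fin r) = i := Fin.ext (by show r - 1 - (r - 1 - (i:ℕ)) = (i:ℕ); omega)
      rw [this, Equiv.swap_apply_self]
  · exact fwd_eq_apply c a s t hT _ (by show firstJ k (fwd c a s) = r - 1 - (t:ℕ); rw [hJ])

end Obligations
end Counting


lemma natCard_eq_filter {α : Type*} [Fintype α] (p : α → Prop) [DecidablePred p] :
    Nat.card {x // p x} = (Finset.univ.filter p).card := by
  rw [Nat.card_eq_fintype_card, Fintype.card_subtype]

lemma count_bij (n r k : ℕ) (c : Fin n) (hk : 1 ≤ k) :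
    ((univ : Finset (Fin n)) ×ˢ (univ.filter fun s : Fin r → Fin n =>
        ∃ t, s t = c ∧ (∀ u, t < u → s u ≠ c) ∧
          ((univ.filter fun u => t < u).image s).card = k - 1)).card
      = (univ.filter fun s' : Fin r → Fin n => k ≤ (univ.image s').card).card := by
  have hrpos : ∀ s' : Fin r → Fin n, k ≤ (univ.image s').card → 0 < r := by
    intro s' h
    rcases Nat.eq_zero_or_pos r with h0 | h0
    · exfalso; subst h0; simp at h; omega
    · exact h0
  refine Finset.card_bij' (fun p _ => fwd c p.1 p.2)
    (fun s' hs' => (s' ⟨firstJ k s', firstJ_lt k s'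
        (hrpos s' (Finset.mem_filter.mp hs').2)⟩, bwd k c s'))
    ?_ ?_ ?_ ?_
  · rintro ⟨a, s⟩ hp
    rw [Finset.mem_product, Finset.mem_filter] at hp
    obtain ⟨t, ht0, ht', hcard⟩ := hp.2.2
    rw [Finset.mem_filter]
    exact ⟨Finset.mem_univ _, fwd_mem k c a s t hk ht0 ht' hcard⟩
  · intro s' hs'
    rw [Finset.mem_filter] at hs'
    have hr : 0 < r := hrpos s' hs'.2
    simp only [Finset.mem_product, Finset.mem_filter]
    obtain ⟨h1, h2, h3⟩ := bwd_mem k c s' hk hs'.2 hr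
    exact ⟨Finset.mem_univ _, Finset.mem_univ _, ⟨_, h1, h2, h3⟩⟩
  · rintro ⟨a, s⟩ hp
    rw [Finset.mem_product, Finset.mem_filter] at hp
    obtain ⟨t, ht0, ht', hcard⟩ := hp.2.2
    obtain ⟨h1, h2⟩ := bwd_fwd k c a s hk t ht0 ht' hcard
    exact Prod.ext h2 h1
  · intro s' hs'
    rw [Finset.mem_filter] at hs'
    have hr : 0 < r := hrpos s' hs'.2
    exact fwd_bwd k c s' hk hs'.2 hr

theorem rtt_return_probability' (n r : ℕ) (hn : 1 ≤ n) (hr : 1 ≤ r) (k : ℕ) (hk : 1 ≤ k)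
    (hkn : k ≤ n) :
    unifProb (fun s : Fin r → Fin n =>
        rttPerm n r s ⟨k - 1, Nat.lt_of_lt_of_le (Nat.sub_lt hk Nat.one_pos) hkn⟩ = ⟨k - 1, Nat.lt_of_lt_of_le (Nat.sub_lt hk Nat.one_pos) hkn⟩) =
      (((k : ℝ) - 1) / n) ^ r +
        unifProb (fun s : Fin r → Fin n => k ≤ distinctCount n r s) / n := by
  have hc : k - 1 < n := by omega
  set c : Fin n := ⟨k - 1, hc⟩ with hcdef
  set P1 : (Fin r → Fin n) → Prop := fun s => ∀ i, (s i : ℕ) < k - 1 with hP1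
  set P2 : (Fin r → Fin n) → Prop := fun s =>
      ∃ t, s t = c ∧ (∀ u, t < u → s u ≠ c) ∧
        ((univ.filter fun u => t < u).image s).card = k - 1 with hP2
  have hchar : ∀ s : Fin r → Fin n,
      (rttPerm n r s ⟨k - 1, by omega⟩ = ⟨k - 1, by omega⟩) ↔ (P1 s ∨ P2 s) := fun s =>
    event_char n r k hn hk hkn s
  -- counting the event
  have hA : Nat.card {s : Fin r → Fin n //
      rttPerm n r s ⟨k - 1, by omega⟩ = ⟨k - 1, by omega⟩}
      = (univ.filter P1).card + (univ.filter P2).card := by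
    rw [Nat.card_congr (Equiv.subtypeEquivRight hchar), natCard_eq_filter]
    have : (univ.filter fun s => P1 s ∨ P2 s) = univ.filter P1 ∪ univ.filter P2 :=
      Finset.filter_or _ _ _
    rw [this, Finset.card_union_of_disjoint]
    rw [Finset.disjoint_left]
    intro s hs1 hs2
    rw [Finset.mem_filter] at hs1 hs2
    obtain ⟨t, ht0, -, -⟩ := hs2.2
    have := hs1.2 t
    rw [ht0] at this
    exact absurd this (by simp [hcdef])
  -- first term
  have hA1 : (univ.filter P1).card = (k - 1) ^ r := by
    have e : {s : Fin r → Fin n // P1 s} ≃ (Fin r → Fin (k - 1)) :=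
      { toFun := fun s i => ⟨(s.1 i : ℕ), s.2 i⟩
        invFun := fun g => ⟨fun i => ⟨(g i : ℕ), lt_of_lt_of_le (g i).isLt (by omega)⟩,
          fun i => (g i).isLt⟩
        left_inv := fun s => by ext i; rfl
        right_inv := fun g => by ext i; rfl }
    rw [← natCard_eq_filter, Nat.card_congr e, Nat.card_eq_fintype_card, Fintype.card_fun,
      Fintype.card_fin, Fintype.card_fin]
  -- second term
  have hA2 : n * (univ.filter P2).card
      = (univ.filter fun s' : Fin r → Fin n => k ≤ (univ.image s').card).card := by
    rw [← count_bij n r k c hk, Finset.card_product, Finset.card_univ, Fintype.card_fin]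
  -- assemble
  rw [unifProb, unifProb, hA, Fintype.card_fun, Fintype.card_fin, Fintype.card_fin]
  have hB : Nat.card {s : Fin r → Fin n // k ≤ distinctCount n r s}
      = (univ.filter fun s' : Fin r → Fin n => k ≤ (univ.image s').card).card := by
    rw [natCard_eq_filter]
    rfl
  rw [hB, ← hA2, hA1]
  have hn0 : (n : ℝ) ≠ 0 := Nat.cast_ne_zero.mpr (by omega)
  have hnr0 : ((n : ℝ)) ^ r ≠ 0 := pow_ne_zero _ hn0
  have hk1 : ((k - 1 : ℕ) : ℝ) = (k : ℝ) - 1 := by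
    push_cast [hk]; ring
  push_cast
  rw [hk1, div_pow]
  field_simp

/-- **Proposition (return probability).** For `1 ≤ k ≤ n`, the probability that card `k`
is in position `k` after `r` iterated random-to-top shuffles equals
`((k-1)/n)^r + P(K ≥ k)/n`, where `K` is the number of distinct values among `r` i.i.d.
uniform samples from `[n]` (positions and cards are `0`-indexed by `Fin n`, so card `k`
corresponds to `⟨k - 1, _⟩`). -/
theorem rtt_return_probability (n r : ℕ) (hn : 1 ≤ n) (hr : 1 ≤ r) (k : ℕ) (hk : 1 ≤ k)
    (hkn : k ≤ n) :
    unifProb (fun s : Fin r → Fin n =>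
        rttPerm n r s ⟨k - 1, by omega⟩ = ⟨k - 1, by omega⟩) =
      (((k : ℝ) - 1) / n) ^ r +
        unifProb (fun s : Fin r → Fin n => k ≤ distinctCount n r s) / n :=
  rtt_return_probability' n r hn hr k hk hkn
end

section
/- Let n ≥ 2 and r ≥ 1 be integers, and let F^r_n be the number of fixed points of the random permutation of [n] obtained by performing r iterated random-to-top shuffles starting from the identity. Then E[F^r_n] = 1 + Σ_{k=0}^{n−2} (k/n)^r. -/
open MeasureTheory ProbabilityTheory Filter Finset Topology
open scoped NNReal

namespace RTT

/-- number of surjections from `Fin t` onto `Fin j` (defined recursively). -/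
def surj : ℕ → ℕ → ℕ
  | 0, 0 => 1
  | 0, _+1 => 0
  | t+1, j => j * (surj t j + surj t (j-1))

@[simp] lemma surj_zero_succ (j : ℕ) : surj 0 (j+1) = 0 := rfl
@[simp] lemma surj_zero_zero : surj 0 0 = 1 := rfl
lemma surj_succ (t j : ℕ) : surj (t+1) j = j * (surj t j + surj t (j-1)) := rfl
@[simp] lemma surj_succ_zero (t : ℕ) : surj (t+1) 0 = 0 := by rw [surj_succ]; simp

lemma sum_choose_surj (m t : ℕ) :
    ∑ j ∈ range (m+1), m.choose j * surj t j = m ^ t := by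
  induction t with
  | zero =>
    rw [Finset.sum_eq_single 0]
    · simp
    · rintro (_|b) hb hb0
      · simp at hb0
      · simp
    · simp
  | succ t ih =>
    have key : ∀ j ∈ range (m+1),
        m.choose j * surj (t+1) j
          = (m.choose j * j) * surj t j + (m.choose j * j) * surj t (j-1) := by
      intro j hj
      rw [surj_succ]; ring
    rw [Finset.sum_congr rfl key, Finset.sum_add_distrib]
    have h2 : ∑ j ∈ range (m+1), (m.choose j * j) * surj t (j-1)
        = ∑ j ∈ range (m+1), (m.choose (j+1) * (j+1)) * surj t j := by
      rw [Finset.sum_range_succ' (fun j => (m.choose j * j) * surj t (j-1))]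
      rw [Finset.sum_range_succ (fun j => (m.choose (j+1) * (j+1)) * surj t j)]
      simp [Nat.choose_succ_self]
    rw [h2, ← Finset.sum_add_distrib]
    have key2 : ∀ j ∈ range (m+1),
        (m.choose j * j) * surj t j + (m.choose (j+1) * (j+1)) * surj t j
          = m * (m.choose j * surj t j) := by
      intro j hj
      rw [mem_range, Nat.lt_succ_iff] at hj
      rw [Nat.choose_succ_right_eq]
      have : m.choose j * j + m.choose j * (m - j) = m.choose j * m := by
        rw [← Nat.mul_add, Nat.add_sub_cancel' hj]
      calc (m.choose j * j) * surj t j + (m.choose j * (m-j)) * surj t j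
          = (m.choose j * j + m.choose j * (m-j)) * surj t j := by ring
        _ = (m.choose j * m) * surj t j := by rw [this]
        _ = m * (m.choose j * surj t j) := by ring
    rw [Finset.sum_congr rfl key2, ← Finset.mul_sum, ih, pow_succ]
    ring

/-- The auxiliary count. -/
def M (n r j : ℕ) : ℕ := ∑ t ∈ range r, n ^ (r-1-t) * ((n-1).choose j * surj t j)

@[simp] lemma M_zero (n j : ℕ) : M n 0 j = 0 := by simp [M]

lemma M_succ_zero (n r : ℕ) : M n (r+1) 0 = n ^ r := by
  rw [M, Finset.sum_eq_single 0]
  · simp [surj_zero_zero]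
  · rintro (_|b) hb hb0
    · simp at hb0
    · simp [surj_succ_zero]
  · simp

lemma M_succ (n r j : ℕ) (hj : 1 ≤ j) :
    M n (r+1) j = j * M n r j + (n-j) * M n r (j-1) := by
  obtain ⟨k, rfl⟩ := Nat.exists_eq_add_of_le hj
  rw [M, Finset.sum_range_succ' (fun t => n ^ (r+1-1-t) * ((n-1).choose (1+k) * surj t (1+k)))]
  have h0 : surj 0 (1+k) = 0 := by rw [Nat.add_comm]; exact surj_zero_succ k
  rw [h0]
  have key : ∀ t ∈ range r,
      n ^ (r+1-1-(t+1)) * ((n-1).choose (1+k) * surj (t+1) (1+k))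
        = (1+k) * (n ^ (r-1-t) * ((n-1).choose (1+k) * surj t (1+k)))
          + (n-(1+k)) * (n ^ (r-1-t) * ((n-1).choose k * surj t k)) := by
    intro t ht
    have he : r+1-1-(t+1) = r-1-t := by omega
    have hs : surj (t+1) (1+k) = (1+k) * (surj t (1+k) + surj t k) := by
      have h1k : 1 + k - 1 = k := by omega
      rw [surj_succ, h1k]
    have hc : (n-1).choose (1+k) * (1+k) = (n-(1+k)) * (n-1).choose k := by
      rw [Nat.add_comm 1 k, Nat.choose_succ_right_eq]
      have : n - 1 - k = n - (k+1) := by omega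
      rw [this, Nat.mul_comm]
    calc n ^ (r+1-1-(t+1)) * ((n-1).choose (1+k) * surj (t+1) (1+k))
        = n ^ (r-1-t) * ((n-1).choose (1+k) * ((1+k) * (surj t (1+k) + surj t k))) := by
          rw [he, hs]
      _ = (1+k) * (n ^ (r-1-t) * ((n-1).choose (1+k) * surj t (1+k)))
          + n ^ (r-1-t) * (((n-1).choose (1+k) * (1+k)) * surj t k) := by ring
      _ = _ := by rw [hc]; ring
  rw [Finset.sum_congr rfl key, Finset.sum_add_distrib, ← Finset.mul_sum, ← Finset.mul_sum]
  simp [M]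

lemma cycVal {m : ℕ} (p q : Fin (m+1)) :
    ((p.cycleRange q : Fin (m+1)) : ℕ)
      = if q < p then (q : ℕ) + 1 else if p = q then 0 else (q : ℕ) := by
  rcases lt_trichotomy q p with h | h | h
  · rw [if_pos h, Fin.coe_cycleRange_of_lt h]
  · rw [if_neg (by simp [h]), if_pos h.symm, h, Fin.cycleRange_self, Fin.val_zero]
  · rw [if_neg (not_lt.2 h.le), if_neg (h.ne), Fin.cycleRange_of_gt h]

lemma cyc_count {m : ℕ} (q : Fin (m+1)) (j : ℕ) :
    ((univ : Finset (Fin (m+1))).filter fun p => ((p.cycleRange q : Fin (m+1)) : ℕ) = j).card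
      = (if j = 0 then 1 else 0)
        + ((if j = (q:ℕ) ∧ 0 < j then j else 0) + (if j = (q:ℕ)+1 then (m+1) - j else 0)) := by
  have hset : ∀ p : Fin (m+1),
      (((p.cycleRange q : Fin (m+1)) : ℕ) = j)
        ↔ (q < p ∧ (q:ℕ)+1 = j) ∨ (p = q ∧ 0 = j) ∨ (p < q ∧ (q:ℕ) = j) := by
    intro p
    rw [cycVal]
    rcases lt_trichotomy q p with h | h | h
    · have h2 : p ≠ q := h.ne'
      have h3 : ¬ p < q := not_lt.2 h.le
      simp only [if_pos h, h2, h3, false_and, or_false, false_or]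
      tauto
    · subst h
      simp only [lt_irrefl, if_neg (lt_irrefl q), if_pos rfl, false_and, false_or, or_false]
      tauto
    · have h1 : ¬ q < p := not_lt.2 h.le
      have h2 : p ≠ q := ne_of_lt h
      simp only [if_neg h1, if_neg h2, h1, h2, false_and, false_or]
      tauto
  have hcard : (univ.filter fun p : Fin (m+1) => ((p.cycleRange q : Fin (m+1)) : ℕ) = j)
      = univ.filter fun p =>
          (q < p ∧ (q:ℕ)+1 = j) ∨ (p = q ∧ 0 = j) ∨ (p < q ∧ (q:ℕ) = j) := by
    apply Finset.filter_congr
    intro p _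
    exact (by simpa using hset p)
  rw [hcard]
  by_cases hj0 : j = 0
  · subst hj0
    have : (univ.filter fun p : Fin (m+1) =>
        (q < p ∧ (q:ℕ)+1 = 0) ∨ (p = q ∧ 0 = 0) ∨ (p < q ∧ (q:ℕ) = 0)) = {q} := by
      ext p
      simp only [mem_filter, mem_univ, true_and, mem_singleton]
      constructor
      · rintro (⟨_, hj⟩ | ⟨hpq, _⟩ | ⟨hpq, hq⟩)
        · omega
        · exact hpq
        · exfalso
          have : (p : ℕ) < (q : ℕ) := hpq
          omega
      · intro h; exact Or.inr (Or.inl ⟨h, by simp⟩)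
    rw [this]
    simp
  · by_cases hjq : j = (q : ℕ)
    · have : (univ.filter fun p : Fin (m+1) =>
          (q < p ∧ (q:ℕ)+1 = j) ∨ (p = q ∧ 0 = j) ∨ (p < q ∧ (q:ℕ) = j)) = Iio q := by
        ext p
        simp only [mem_filter, mem_univ, true_and, mem_Iio]
        constructor
        · rintro (⟨_, hj⟩ | ⟨_, hj⟩ | ⟨hpq, _⟩)
          · omega
          · omega
          · exact hpq
        · intro h; exact Or.inr (Or.inr ⟨h, hjq.symm⟩)
      rw [this, Fin.card_Iio]
      have h1 : ¬ (j = (q:ℕ)+1) := by omega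
      rw [if_neg hj0, if_pos ⟨hjq, Nat.pos_of_ne_zero hj0⟩, if_neg h1]
      omega
    · by_cases hjq1 : j = (q:ℕ)+1
      · have : (univ.filter fun p : Fin (m+1) =>
            (q < p ∧ (q:ℕ)+1 = j) ∨ (p = q ∧ 0 = j) ∨ (p < q ∧ (q:ℕ) = j)) = Ioi q := by
          ext p
          simp only [mem_filter, mem_univ, true_and, mem_Ioi]
          constructor
          · rintro (⟨hpq, _⟩ | ⟨_, hj⟩ | ⟨_, hj⟩)
            · exact hpq
            · omega
            · omega
          · intro h; exact Or.inl ⟨h, hjq1.symm⟩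
        rw [this, Fin.card_Ioi]
        rw [if_neg hj0, if_neg (by tauto), if_pos hjq1]
        omega
      · have : (univ.filter fun p : Fin (m+1) =>
            (q < p ∧ (q:ℕ)+1 = j) ∨ (p = q ∧ 0 = j) ∨ (p < q ∧ (q:ℕ) = j)) = ∅ := by
          ext p
          simp only [mem_filter, mem_univ, true_and, notMem_empty, iff_false]
          rintro (⟨_, hj⟩ | ⟨_, hj⟩ | ⟨_, hj⟩) <;> omega
        rw [this, Finset.card_empty]
        rw [if_neg hj0, if_neg (by tauto), if_neg hjq1]

lemma rttPerm_succ (n r : ℕ) (s : Fin (r+1) → Fin n) :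
    rttPerm n (r+1) s = moveToTop (s (Fin.last r)) (rttPerm n r (fun i => s i.castSucc)) := by
  rw [rttPerm, List.ofFn_succ', List.concat_eq_append, List.foldl_append]
  rfl

lemma inv_moveToTop {n : ℕ} (c : Fin n) (π : Equiv.Perm (Fin n)) (i : Fin n) :
    (moveToTop c π)⁻¹ i = (π⁻¹ c).cycleRange (π⁻¹ i) := by
  simp [moveToTop, mul_inv_rev, Equiv.Perm.mul_apply]

def snocE (m r : ℕ) : ((Fin r → Fin (m+1)) × Fin (m+1)) ≃ (Fin (r+1) → Fin (m+1)) where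
  toFun p := Fin.snoc p.1 p.2
  invFun s := (Fin.init s, s (Fin.last r))
  left_inv p := by
    ext1
    · funext k
      simp [Fin.init]
    · simp
  right_inv s := Fin.snoc_init_self s

lemma snocE_apply (m r : ℕ) (s₀ : Fin r → Fin (m+1)) (c : Fin (m+1)) :
    snocE m r (s₀, c) = Fin.snoc s₀ c := rfl

/-- Number of selection sequences after which card `i` sits at position `j`. -/
def cnt (m r : ℕ) (i : Fin (m+1)) (j : ℕ) : ℕ :=
  ((univ : Finset (Fin r → Fin (m+1))).filter
    fun s => (((rttPerm (m+1) r s)⁻¹ i : Fin (m+1)) : ℕ) = j).card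

lemma cnt_zero (m : ℕ) (i : Fin (m+1)) (j : ℕ) :
    cnt m 0 i j = if (i : ℕ) = j then 1 else 0 := by
  rw [cnt]
  have : rttPerm (m+1) 0 = fun _ => 1 := rfl
  by_cases h : (i : ℕ) = j <;>
    simp [this, Finset.filter_true_of_mem, Finset.filter_false_of_mem, h,
      Finset.card_univ, Fintype.card_fun]

lemma cnt_succ (m r : ℕ) (i : Fin (m+1)) (j : ℕ) :
    cnt m (r+1) i j = if j = 0 then (m+1) ^ r
      else j * cnt m r i j + ((m+1) - j) * cnt m r i (j-1) := by
  classical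
  set e := snocE m r with he
  have h1 : cnt m (r+1) i j
      = ∑ s : Fin (r+1) → Fin (m+1),
          (if (((rttPerm (m+1) (r+1) s)⁻¹ i : Fin (m+1)) : ℕ) = j then 1 else 0) := by
    rw [cnt, Finset.card_filter]
  rw [h1, ← Equiv.sum_comp e
    (fun s => if (((rttPerm (m+1) (r+1) s)⁻¹ i : Fin (m+1)) : ℕ) = j then 1 else 0),
    Fintype.sum_prod_type]
  have h2 : ∀ (s₀ : Fin r → Fin (m+1)) (c : Fin (m+1)),
      ((rttPerm (m+1) (r+1) (e (s₀, c)))⁻¹ i : Fin (m+1))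
        = ((rttPerm (m+1) r s₀)⁻¹ c).cycleRange ((rttPerm (m+1) r s₀)⁻¹ i) := by
    intro s₀ c
    have hs : (fun i => (e (s₀, c)) i.castSucc) = s₀ := by
      funext k
      rw [he, snocE_apply]
      exact Fin.snoc_castSucc _ _ _
    have hl : (e (s₀, c)) (Fin.last r) = c := by
      rw [he, snocE_apply]
      exact Fin.snoc_last _ _
    rw [rttPerm_succ, hs, hl, inv_moveToTop]
  have h3 : ∀ s₀ : Fin r → Fin (m+1),
      (∑ c : Fin (m+1),
        if (((rttPerm (m+1) (r+1) (e (s₀, c)))⁻¹ i : Fin (m+1)) : ℕ) = j then 1 else 0)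
      = (if j = 0 then 1 else 0)
        + ((if j = (((rttPerm (m+1) r s₀)⁻¹ i : Fin (m+1)) : ℕ) ∧ 0 < j then j else 0)
          + (if j = (((rttPerm (m+1) r s₀)⁻¹ i : Fin (m+1)) : ℕ) + 1 then (m+1) - j else 0)) := by
    intro s₀
    set π := rttPerm (m+1) r s₀ with hπ
    set q := (π⁻¹ i : Fin (m+1)) with hq
    have : (∑ c : Fin (m+1),
        if (((rttPerm (m+1) (r+1) (e (s₀, c)))⁻¹ i : Fin (m+1)) : ℕ) = j then 1 else 0)
        = ∑ c : Fin (m+1), if (((π⁻¹ c).cycleRange q : Fin (m+1)) : ℕ) = j then 1 else 0 := by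
      apply Finset.sum_congr rfl
      intro c _
      rw [h2 s₀ c]
    rw [this]
    refine (Equiv.sum_comp (π⁻¹ : Equiv.Perm (Fin (m+1)))
      (fun p : Fin (m+1) => if ((p.cycleRange q : Fin (m+1)) : ℕ) = j then (1:ℕ) else 0)).trans ?_
    rw [← Finset.card_filter]
    exact cyc_count q j
  rw [Finset.sum_congr rfl (fun s₀ _ => h3 s₀)]
  rw [Finset.sum_add_distrib, Finset.sum_add_distrib]
  have hA : (∑ _s₀ : Fin r → Fin (m+1), (if j = 0 then 1 else 0))
      = if j = 0 then (m+1)^r else 0 := by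
    rw [Finset.sum_const, Finset.card_univ, Fintype.card_fun, Fintype.card_fin, Fintype.card_fin,
      smul_eq_mul]
    by_cases h : j = 0 <;> simp [h]
  have hB : (∑ s₀ : Fin r → Fin (m+1),
      (if j = (((rttPerm (m+1) r s₀)⁻¹ i : Fin (m+1)) : ℕ) ∧ 0 < j then j else 0))
      = if 0 < j then j * cnt m r i j else 0 := by
    by_cases h : 0 < j
    · rw [if_pos h, cnt, Finset.card_filter, Finset.mul_sum]
      apply Finset.sum_congr rfl
      intro s₀ _
      by_cases hc : (((rttPerm (m+1) r s₀)⁻¹ i : Fin (m+1)) : ℕ) = j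
      · rw [if_pos ⟨hc.symm, h⟩, if_pos hc, mul_one]
      · rw [if_neg (by tauto), if_neg hc, mul_zero]
    · rw [if_neg h]
      apply Finset.sum_eq_zero
      intro s₀ _
      rw [if_neg (by tauto)]
  have hC : (∑ s₀ : Fin r → Fin (m+1),
      (if j = (((rttPerm (m+1) r s₀)⁻¹ i : Fin (m+1)) : ℕ) + 1 then (m+1) - j else 0))
      = if 0 < j then ((m+1) - j) * cnt m r i (j-1) else 0 := by
    by_cases h : 0 < j
    · rw [if_pos h, cnt, Finset.card_filter, Finset.mul_sum]
      apply Finset.sum_congr rfl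
      intro s₀ _
      by_cases hc : (((rttPerm (m+1) r s₀)⁻¹ i : Fin (m+1)) : ℕ) = j - 1
      · rw [if_pos (by omega), if_pos hc, mul_one]
      · rw [if_neg (by omega), if_neg hc, mul_zero]
    · rw [if_neg h]
      apply Finset.sum_eq_zero
      intro s₀ _
      rw [if_neg (by omega)]
  rw [hA, hB, hC]
  by_cases h : j = 0
  · simp [h]
  · have h' : 0 < j := Nat.pos_of_ne_zero h
    rw [if_neg h, if_pos h', if_pos h', if_neg h, Nat.zero_add]

lemma cnt_closed (m : ℕ) (r : ℕ) : ∀ (i : Fin (m+1)) (j : ℕ), j ≤ (i:ℕ) →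
    cnt m r i j = (if (i:ℕ) = j then j ^ r else 0) + M (m+1) r j := by
  induction r with
  | zero =>
    intro i j hj
    rw [cnt_zero, M_zero]
    by_cases h : (i:ℕ) = j <;> simp [h]
  | succ r ih =>
    intro i j hj
    rw [cnt_succ]
    by_cases h0 : j = 0
    · subst h0
      rw [if_pos rfl, M_succ_zero]
      have : (0:ℕ) ^ (r+1) = 0 := by simp
      by_cases h : (i:ℕ) = 0 <;> simp [h, this]
    · have h1 : 1 ≤ j := Nat.pos_of_ne_zero h0
      rw [if_neg h0, ih i j hj, ih i (j-1) (by omega), M_succ _ _ _ h1]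
      have hne : ¬ ((i:ℕ) = j - 1) := by omega
      rw [if_neg hne]
      by_cases h : (i:ℕ) = j
      · rw [if_pos h, if_pos h]
        ring
      · rw [if_neg h, if_neg h]
        ring

lemma sum_fixed (m r : ℕ) :
    (∑ s : Fin r → Fin (m+1), fixedPointCount (rttPerm (m+1) r s))
      = ∑ i : Fin (m+1), cnt m r i (i:ℕ) := by
  have key : ∀ s : Fin r → Fin (m+1),
      fixedPointCount (rttPerm (m+1) r s)
        = ∑ i : Fin (m+1),
            if (((rttPerm (m+1) r s)⁻¹ i : Fin (m+1)) : ℕ) = (i:ℕ) then 1 else 0 := by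
    intro s
    rw [fixedPointCount, Finset.card_filter]
    apply Finset.sum_congr rfl
    intro i _
    congr 1
    set π := rttPerm (m+1) r s
    have : π i = i ↔ (((π⁻¹ i : Fin (m+1)) : ℕ) = (i:ℕ)) := by
      rw [Fin.val_eq_val, Equiv.Perm.inv_eq_iff_eq]
      exact eq_comm
    simp only [this]
  rw [Finset.sum_congr rfl (fun s _ => key s), Finset.sum_comm]
  apply Finset.sum_congr rfl
  intro i _
  rw [cnt, Finset.card_filter]

lemma total (m r : ℕ) :
    (∑ s : Fin r → Fin (m+1), fixedPointCount (rttPerm (m+1) r s))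
      = (∑ k ∈ range (m+1), k ^ r) + ∑ t ∈ range r, (m+1) ^ (r-1-t) * m ^ t := by
  rw [sum_fixed]
  have : ∀ i : Fin (m+1), cnt m r i (i:ℕ) = (i:ℕ) ^ r + M (m+1) r (i:ℕ) := by
    intro i
    rw [cnt_closed m r i (i:ℕ) le_rfl, if_pos rfl]
  rw [Finset.sum_congr rfl (fun i _ => this i), Finset.sum_add_distrib]
  congr 1
  · exact Fin.sum_univ_eq_sum_range (fun k => k ^ r) (m+1)
  · rw [Fin.sum_univ_eq_sum_range (fun k => M (m+1) r k) (m+1)]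
    unfold M
    rw [Finset.sum_comm]
    apply Finset.sum_congr rfl
    intro t _
    rw [← Finset.mul_sum]
    congr 1
    simpa using sum_choose_surj m t

end RTT

/-- **(Pehlivan's formula.)** For `n ≥ 2` and `r ≥ 1`, the expected number of fixed points
after `r` iterated random-to-top shuffles is `1 + Σ_{k=0}^{n-2} (k/n)^r`. -/
theorem rtt_expected_fixedPoints (n r : ℕ) (hn : 2 ≤ n) (hr : 1 ≤ r) :
    unifExpect (fun s : Fin r → Fin n => (fixedPointCount (rttPerm n r s) : ℝ)) =
      1 + ∑ k ∈ Finset.range (n - 1), ((k : ℝ) / n) ^ r := by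
  obtain ⟨m, rfl⟩ : ∃ m, n = m + 1 := ⟨n - 1, by omega⟩
  rw [unifExpect]
  rw [← Nat.cast_sum]
  rw [RTT.total m r]
  have hcard : (Fintype.card (Fin r → Fin (m+1)) : ℝ) = ((m+1 : ℕ) : ℝ) ^ r := by
    rw [Fintype.card_fun]
    push_cast
    simp
  rw [hcard]
  have hNr : ((m:ℝ)+1) ^ r ≠ 0 := by positivity
  have geom : ∑ t ∈ Finset.range r, ((m:ℝ)+1) ^ (r-1-t) * (m:ℝ) ^ t
      = ((m:ℝ)+1) ^ r - (m:ℝ) ^ r := by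
    have h := geom_sum₂_mul (R := ℝ) (m:ℝ) ((m:ℝ)+1) r
    have h2 : (∑ t ∈ Finset.range r, (m:ℝ) ^ t * ((m:ℝ)+1) ^ (r-1-t))
        = ∑ t ∈ Finset.range r, ((m:ℝ)+1) ^ (r-1-t) * (m:ℝ) ^ t := by
      apply Finset.sum_congr rfl; intro t _; ring
    rw [h2] at h
    have h3 : (m:ℝ) - ((m:ℝ)+1) = -1 := by ring
    rw [h3] at h
    linarith
  push_cast
  rw [geom]
  have hsplit : ∑ k ∈ Finset.range (m+1), (k:ℝ) ^ r
      = (∑ k ∈ Finset.range m, (k:ℝ) ^ r) + (m:ℝ) ^ r :=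
    Finset.sum_range_succ _ m
  rw [hsplit]
  have hrhs : ∑ k ∈ Finset.range m, ((k:ℝ) / ((m:ℝ)+1)) ^ r
      = (∑ k ∈ Finset.range m, (k:ℝ) ^ r) / ((m:ℝ)+1) ^ r := by
    rw [Finset.sum_div]
    apply Finset.sum_congr rfl; intro k _; rw [div_pow]
  rw [hrhs]
  field_simp
  ring
end
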